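/- arXiv:1007.1351 — 3 statements merged into one kernel-verified Lean document; each statement's English description precedes it below -/
import Mathlib

section
/- Let (X,d,μ) be a space of homogeneous type, fix x₀ ∈ X, and let β be a μ-measurable function on X with β₊ := sup_X β < −1. Then there exist r₀ > 0 and a constant c > 0, independent of r and x, such that for all 0 < r ≤ r₀ and all x ∈ X: ∫_{X∖B(x₀,r)} (μ(B_{x₀y}))^{β(x)} dμ(y) ≤ c·((β(x)+1)/β(x))·(μ(B(x₀,r)))^{β(x)+1}. -/
open MeasureTheory Set ENNReal

noncomputable section

namespace TwoWeight

/-- A quasimetric measure space `(X, d, μ)`. -/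
structure QMS (X : Type*) [MeasurableSpace X] where
  d : X → X → ℝ
  μ : Measure X
  a₀ : ℝ
  a₁ : ℝ
  a₀_pos : 0 < a₀
  a₁_pos : 0 < a₁
  d_nonneg : ∀ x y, 0 ≤ d x y
  d_eq_zero_iff : ∀ x y, d x y = 0 ↔ x = y
  d_triangle : ∀ x y z, d x y ≤ a₁ * (d x z + d z y)
  d_symm : ∀ x y, d x y ≤ a₀ * d y x
  ball_measurable : ∀ x r, MeasurableSet {y | d x y < r}
  ball_lt_top : ∀ x r, μ {y | d x y < r} < ⊤
  singleton_null : ∀ x, μ {x} = 0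
  annulus_nonempty : ∀ x (r R : ℝ), 0 < r → r < R →
    ENNReal.ofReal R < ⨆ (u : X) (v : X), ENNReal.ofReal (d u v) →
    ({y | d x y < R} \ {y | d x y < r}).Nonempty

/-- `p₋(E)`, the infimum of `p` over a set. -/
def infOn {X : Type*} (p : X → ℝ) (E : Set X) : ℝ := sInf (p '' E)

/-- `p₊(E)`, the supremum of `p` over a set. -/
def supOn {X : Type*} (p : X → ℝ) (E : Set X) : ℝ := sSup (p '' E)

/-- The conjugate exponent `t' = t/(t-1)`. -/
def conj (t : ℝ) : ℝ := t / (t - 1)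

namespace QMS

variable {X : Type*} [MeasurableSpace X] (S : QMS X)

/-- The ball `B(x,r)`. -/
def ball (x : X) (r : ℝ) : Set X := {y | S.d x y < r}

/-- The closed ball `B̄(x,r)`. -/
def cball (x : X) (r : ℝ) : Set X := {y | S.d x y ≤ r}

/-- The diameter `L` of the space, as an extended real. -/
def L : ℝ≥0∞ := ⨆ (u : X) (v : X), ENNReal.ofReal (S.d u v)

/-- The doubling condition for `μ`: SHT = QMS + doubling. -/
def doubling : Prop :=
  ∃ c : ℝ, 0 < c ∧ ∀ x r, S.μ (S.ball x (2 * r)) ≤ ENNReal.ofReal c * S.μ (S.ball x r)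

/-- The reverse doubling condition with constants `A, B`. -/
def revDoubling (A B : ℝ) : Prop :=
  ∀ x r, 0 < r → ENNReal.ofReal B * S.μ (S.ball x r) ≤ S.μ (S.ball x (A * r))

/-- μ is upper Ahlfors 1-regular. -/
def upperAhlfors1 : Prop :=
  ∃ c : ℝ, 0 < c ∧ ∀ x r, 0 < r → S.μ (S.ball x r) ≤ ENNReal.ofReal (c * r)

/-- `μ(B_{xy})` as a real number. -/
def mB (x y : X) : ℝ := (S.μ (S.ball x (S.d x y))).toReal

/-- log-Hölder type condition on `X` (with respect to measures of balls). -/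
def LH (p : X → ℝ) : Prop :=
  ∃ b c : ℝ, 0 < b ∧ 0 < c ∧ ∀ x y, S.d x y ≤ b →
    |p x - p y| ≤ c / (-Real.log (S.mB x y))

/-- log-Hölder type condition at a point `x`. -/
def LHAt (p : X → ℝ) (x : X) : Prop :=
  ∃ b c : ℝ, 0 < b ∧ 0 < c ∧ ∀ y, S.d x y ≤ b →
    |p x - p y| ≤ c / (-Real.log (S.mB x y))

/-- log-Hölder condition on `X` with respect to the quasimetric. -/
def LHbar (p : X → ℝ) : Prop :=
  ∃ b c : ℝ, 0 < b ∧ 0 < c ∧ ∀ x y, S.d x y ≤ b →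
    |p x - p y| ≤ c / (-Real.log (S.d x y))

/-- log-Hölder condition at a point with respect to the quasimetric. -/
def LHbarAt (p : X → ℝ) (x : X) : Prop :=
  ∃ b c : ℝ, 0 < b ∧ 0 < c ∧ ∀ y, S.d x y ≤ b →
    |p x - p y| ≤ c / (-Real.log (S.d x y))

/-- The class `𝒫(N)`. -/
def PClass (p : X → ℝ) (N : ℝ) : Prop :=
  ∃ b c : ℝ, 0 < b ∧ 0 < c ∧ ∀ x r, 0 < r → r ≤ b →
    (S.μ (S.ball x (N * r))).toReal ^ (infOn p (S.ball x r) - supOn p (S.ball x r)) ≤ c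

/-- The class `𝒫(N, x)`. -/
def PClassAt (p : X → ℝ) (N : ℝ) (x : X) : Prop :=
  ∃ b c : ℝ, 0 < b ∧ 0 < c ∧ ∀ r, 0 < r → r ≤ b →
    (S.μ (S.ball x (N * r))).toReal ^ (infOn p (S.ball x r) - supOn p (S.ball x r)) ≤ c

/-- The modular `S_p(f) = ∫ |f|^{p(x)} dμ`. -/
def modular (p : X → ℝ) (f : X → ℝ) : ℝ≥0∞ :=
  ∫⁻ x, ENNReal.ofReal (|f x| ^ p x) ∂S.μ

/-- Membership in the variable exponent Lebesgue space `L^{p(·)}(X)`. -/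
def MemVL (p : X → ℝ) (f : X → ℝ) : Prop := S.modular p f < ⊤

/-- The norm of the variable exponent Lebesgue space `L^{p(·)}(X)`. -/
def VNorm (p : X → ℝ) (f : X → ℝ) : ℝ :=
  sInf {l : ℝ | 0 < l ∧ S.modular p (fun x => f x / l) ≤ 1}

/-- Boundedness of an operator from `L^{p(·)}(X)` to `L^{q(·)}(X)`. -/
def BoundedVL (p q : X → ℝ) (T : (X → ℝ) → X → ℝ) : Prop :=
  ∃ c : ℝ, 0 < c ∧ ∀ f, S.MemVL p f → S.VNorm q (T f) ≤ c * S.VNorm p f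

/-- The Hardy type transform `T_{v,w}`. -/
def Tvw (x₀ : X) (v w : X → ℝ) (f : X → ℝ) : X → ℝ :=
  fun x => v x * ∫ y in S.ball x₀ (S.d x₀ x), f y * w y ∂S.μ

/-- The dual Hardy type transform `T'_{v,w}`. -/
def Tvw' (x₀ : X) (v w : X → ℝ) (f : X → ℝ) : X → ℝ :=
  fun x => v x * ∫ y in (S.cball x₀ (S.d x₀ x))ᶜ, f y * w y ∂S.μ

/-- The potential operator `T_α` with constant exponent. -/
def Tpot (α : ℝ) (f : X → ℝ) : X → ℝ :=
  fun x => ∫ y, f y * (S.μ (S.ball x (S.d x y))).toReal ^ (α - 1) ∂S.μ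

/-- The potential operator `T_{α(·)}` with variable exponent. -/
def TpotVar (α : X → ℝ) (f : X → ℝ) : X → ℝ :=
  fun x => ∫ y, f y * (S.μ (S.ball x (S.d x y))).toReal ^ (α x - 1) ∂S.μ

/-- The potential operator `I_α` with constant exponent. -/
def Ipot (α : ℝ) (f : X → ℝ) : X → ℝ :=
  fun x => ∫ y, f y * S.d x y ^ (α - 1) ∂S.μ

/-- The potential operator `I_{α(·)}` with variable exponent. -/
def IpotVar (α : X → ℝ) (f : X → ℝ) : X → ℝ :=
  fun x => ∫ y, f y * S.d x y ^ (α x - 1) ∂S.μ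

/-- The Hardy–Littlewood maximal operator. -/
def maximal (f : X → ℝ) : X → ℝ :=
  fun x => ⨆ (r : ℝ) (_ : 0 < r), (S.μ (S.ball x r)).toReal⁻¹ * ∫ y in S.ball x r, |f y| ∂S.μ

/-- The set `F_x` (with reverse doubling constant `A`). -/
def Fset (x₀ : X) (A : ℝ) (x : X) : Set X :=
  {y | S.d x₀ x / (A ^ 2 * S.a₁) ≤ S.d x₀ y ∧ S.d x₀ y ≤ A ^ 2 * S.a₁ * S.d x₀ x}

/-- `p₀(x) = p₋(B̄_{x₀x})`. -/
def p0 (p : X → ℝ) (x₀ x : X) : ℝ := infOn p (S.cball x₀ (S.d x₀ x))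

/-- `p̃₀(x)`. -/
def p0t (p : X → ℝ) (x₀ : X) (a pc : ℝ) (x : X) : ℝ :=
  if S.d x₀ x ≤ a then S.p0 p x₀ x else pc

/-- `p₁(x) = p₋(B̄(x₀,a) \ B_{x₀x})`. -/
def p1 (p : X → ℝ) (x₀ : X) (a : ℝ) (x : X) : ℝ :=
  infOn p (S.cball x₀ a \ S.ball x₀ (S.d x₀ x))

/-- `p̃₁(x)`. -/
def p1t (p : X → ℝ) (x₀ : X) (a pc : ℝ) (x : X) : ℝ :=
  if S.d x₀ x ≤ a then S.p1 p x₀ a x else pc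

/-- The annuli `I_{2,k}`. -/
def I2k (x₀ : X) (A : ℝ) (k : ℤ) : Set X :=
  if S.L = ⊤ then S.cball x₀ (A ^ (k + 2) * S.a₁) \ S.ball x₀ (A ^ (k - 1) / S.a₁)
  else S.cball x₀ (A ^ (k + 2) * S.a₁ * S.L.toReal) \ S.ball x₀ (A ^ (k - 1) * S.L.toReal / S.a₁)

/-- A positive increasing function on `(0, 2L)`. -/
def PosIncOn (v : ℝ → ℝ) : Prop :=
  (∀ t : ℝ, 0 < t → ENNReal.ofReal t < 2 * S.L → 0 < v t) ∧
  ∀ s t : ℝ, 0 < s → s ≤ t → ENNReal.ofReal t < 2 * S.L → v s ≤ v t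

end QMS

end TwoWeight
open TwoWeight in
private lemma measurable_mBall {X : Type*} [MeasurableSpace X] (S : QMS X) (x₀ : X) :
    Measurable (fun y => S.μ (S.ball x₀ (S.d x₀ y))) := by
  have hd : Measurable (fun y => S.d x₀ y) := by
    apply measurable_of_Iio
    intro r
    exact S.ball_measurable x₀ r
  have hg : Monotone (fun ρ : ℝ => S.μ (S.ball x₀ ρ)) := by
    intro a b hab
    exact measure_mono (fun z hz => lt_of_lt_of_le hz hab)
  exact hg.measurable.comp hd

open TwoWeight in
private lemma dist_bound {X : Type*} [MeasurableSpace X] (S : QMS X) (x₀ : X)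
    (C : ℝ) (hC : 1 ≤ C)
    (hdub : ∀ x r, S.μ (S.ball x (2 * r)) ≤ ENNReal.ofReal C * S.μ (S.ball x r))
    (t : ℝ≥0∞) :
    S.μ {y | S.μ (S.ball x₀ (S.d x₀ y)) < t} ≤ ENNReal.ofReal C * t := by
  set m : X → ℝ≥0∞ := fun y => S.μ (S.ball x₀ (S.d x₀ y)) with hm
  set A : Set X := {y | m y < t} with hA
  have hC1 : (1 : ℝ≥0∞) ≤ ENNReal.ofReal C := ENNReal.one_le_ofReal.2 hC
  have htriv : ∀ u : ℝ≥0∞, u ≤ t → u ≤ ENNReal.ofReal C * t := fun u hu =>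
    hu.trans (le_mul_of_one_le_left zero_le hC1)
  rcases A.eq_empty_or_nonempty with hAe | ⟨y₀, hy₀⟩
  · rw [hAe]; simp
  by_cases hbdd : BddAbove ((fun y => S.d x₀ y) '' A)
  · set s := sSup ((fun y => S.d x₀ y) '' A) with hs
    have hDne : ((fun y => S.d x₀ y) '' A).Nonempty := ⟨_, ⟨y₀, hy₀, rfl⟩⟩
    have hle_s : ∀ y ∈ A, S.d x₀ y ≤ s := fun y hy => le_csSup hbdd ⟨y, hy, rfl⟩
    rcases le_or_gt s 0 with hs0 | hs0
    · have hsub : A ⊆ {x₀} := by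
        intro y hy
        have h1 : S.d x₀ y ≤ 0 := (hle_s y hy).trans hs0
        have h2 : S.d x₀ y = 0 := le_antisymm h1 (S.d_nonneg x₀ y)
        have h3 := (S.d_eq_zero_iff x₀ y).1 h2
        simp [h3.symm]
      calc S.μ A ≤ S.μ {x₀} := measure_mono hsub
        _ = 0 := S.singleton_null x₀
        _ ≤ _ := zero_le
    · have hball_s : S.μ (S.ball x₀ s) ≤ t := by
        have hU : S.ball x₀ s = ⋃ n : ℕ, S.ball x₀ (s - 1 / (n + 1)) := by
          ext z
          constructor
          · intro hz
            have hz' : S.d x₀ z < s := hz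
            obtain ⟨n, hn⟩ := exists_nat_one_div_lt (sub_pos.2 hz')
            refine mem_iUnion.2 ⟨n, ?_⟩
            show S.d x₀ z < s - 1 / (n + 1)
            linarith
          · intro hz
            obtain ⟨n, hn⟩ := mem_iUnion.1 hz
            have hn' : S.d x₀ z < s - 1 / (n + 1) := hn
            have hp : (0 : ℝ) < 1 / (n + 1) := by positivity
            show S.d x₀ z < s
            linarith
        have hmono : Monotone (fun n : ℕ => S.ball x₀ (s - 1 / (n + 1))) := by
          intro a b hab z hz
          have ha : (a : ℝ) ≤ b := Nat.cast_le.2 hab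
          have h1 : (1 : ℝ) / (b + 1) ≤ 1 / (a + 1) :=
            one_div_le_one_div_of_le (by positivity) (by linarith)
          have hz' : S.d x₀ z < s - 1 / (a + 1) := hz
          show S.d x₀ z < s - 1 / (b + 1)
          linarith
        rw [hU, hmono.directed_le.measure_iUnion]
        apply iSup_le
        intro n
        have hlt : s - 1 / (n + 1) < s := by
          have hp : (0 : ℝ) < 1 / (n + 1) := by positivity
          linarith
        obtain ⟨z, ⟨y, hyA, rfl⟩, hzy⟩ := exists_lt_of_lt_csSup hDne hlt
        have hsub : S.ball x₀ (s - 1 / (n + 1)) ⊆ S.ball x₀ (S.d x₀ y) :=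
          fun w hw => lt_of_lt_of_le hw hzy.le
        exact (lt_of_le_of_lt (measure_mono hsub) hyA).le
      have hsub : A ⊆ S.ball x₀ (2 * s) := fun y hy =>
        lt_of_le_of_lt (hle_s y hy) (by linarith)
      calc S.μ A ≤ S.μ (S.ball x₀ (2 * s)) := measure_mono hsub
        _ ≤ ENNReal.ofReal C * S.μ (S.ball x₀ s) := hdub x₀ s
        _ ≤ ENNReal.ofReal C * t := mul_le_mul_right hball_s _
  · apply htriv
    have hcover : (univ : Set X) = ⋃ n : ℕ, S.ball x₀ n := by
      ext z
      simp only [mem_univ, true_iff, mem_iUnion]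
      obtain ⟨n, hn⟩ := exists_nat_gt (S.d x₀ z)
      exact ⟨n, hn⟩
    have hmono : Monotone (fun n : ℕ => S.ball x₀ (n : ℝ)) := by
      intro a b hab z hz
      have hz' : S.d x₀ z < (a : ℝ) := hz
      show S.d x₀ z < (b : ℝ)
      exact lt_of_lt_of_le hz' (Nat.cast_le.2 hab)
    calc S.μ A ≤ S.μ univ := measure_mono (subset_univ A)
      _ = ⨆ n : ℕ, S.μ (S.ball x₀ n) := by
          rw [hcover, hmono.directed_le.measure_iUnion]
      _ ≤ t := by
          apply iSup_le
          intro n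
          obtain ⟨ρ, ⟨y, hyA, rfl⟩, hρ⟩ := not_bddAbove_iff.1 hbdd n
          have hsub : S.ball x₀ (n : ℝ) ⊆ S.ball x₀ (S.d x₀ y) :=
            fun w hw => hw.trans hρ
          exact (lt_of_le_of_lt (measure_mono hsub) hyA).le

open TwoWeight in
/-- Lemma 1.7 (i). -/
theorem statement3 {X : Type*} [MeasurableSpace X] [Nonempty X]
    (S : QMS X) (hdub : S.doubling) (x₀ : X)
    (β : X → ℝ) (hβm : Measurable β)
    (hβ : supOn β Set.univ < -1) :
    ∃ r₀ c : ℝ, 0 < r₀ ∧ 0 < c ∧ ∀ r : ℝ, 0 < r → r ≤ r₀ → ∀ x : X,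
      (∫⁻ y in (S.ball x₀ r)ᶜ,
          ENNReal.ofReal ((S.μ (S.ball x₀ (S.d x₀ y))).toReal ^ β x) ∂S.μ)
        ≤ ENNReal.ofReal
            (c * ((β x + 1) / β x) * (S.μ (S.ball x₀ r)).toReal ^ (β x + 1)) := by
  obtain ⟨cd, hcd, hdub0⟩ := hdub
  set C : ℝ := max cd 1 with hCdef
  have hC1 : (1 : ℝ) ≤ C := le_max_right _ _
  have hC0 : (0 : ℝ) < C := lt_of_lt_of_le one_pos hC1
  have hdub1 : ∀ x r, S.μ (S.ball x (2 * r)) ≤ ENNReal.ofReal C * S.μ (S.ball x r) :=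
    fun x r => (hdub0 x r).trans
      (mul_le_mul_left (ENNReal.ofReal_le_ofReal (le_max_left _ _)) _)
  set βs : ℝ := supOn β Set.univ with hβsdef
  have hβs1 : βs < -1 := hβ
  have hbdd : BddAbove (β '' Set.univ) := by
    by_contra h
    have hβ' : sSup (β '' Set.univ) < -1 := hβ
    rw [Real.sSup_of_not_bddAbove h] at hβ'
    linarith
  have hβx : ∀ x, β x ≤ βs := fun x => le_csSup hbdd ⟨x, mem_univ x, rfl⟩
  set b : ℝ := (2 : ℝ) ^ (βs + 1) with hbdef
  have hb0 : (0 : ℝ) < b := Real.rpow_pos_of_pos two_pos _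
  have hb1 : b < 1 := Real.rpow_lt_one_of_one_lt_of_neg one_lt_two (by linarith)
  set K : ℝ := (1 - b)⁻¹ with hKdef
  have hK0 : (0 : ℝ) < K := inv_pos.2 (by linarith)
  have hβsneg : βs < 0 := by linarith
  set δ : ℝ := (βs + 1) / βs with hδdef
  have hδ0 : (0 : ℝ) < δ := div_pos_of_neg_of_neg (by linarith) hβsneg
  set c1 : ℝ := 2 * C * K with hc1def
  have hc10 : (0 : ℝ) < c1 := by positivity
  refine ⟨1, c1 / δ, one_pos, by positivity, ?_⟩
  intro r hr _ x
  have hβxs : β x ≤ βs := hβx x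
  have hβxlt : β x < -1 := lt_of_le_of_lt hβxs hβs1
  have hβxne : β x ≠ 0 := by linarith
  set m : X → ℝ≥0∞ := fun y => S.μ (S.ball x₀ (S.d x₀ y)) with hmdef
  set M : ℝ≥0∞ := S.μ (S.ball x₀ r) with hMdef
  by_cases hM0 : M = 0
  · have hpow : ∀ n : ℕ, S.μ (S.ball x₀ (2 ^ n * r)) = 0 := by
      intro n
      induction n with
      | zero => simpa using hM0
      | succ n ih =>
        have h1 := hdub1 x₀ (2 ^ n * r)
        have h2 : (2 : ℝ) * (2 ^ n * r) = 2 ^ (n + 1) * r := by ring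
        rw [h2, ih, mul_zero] at h1
        exact le_antisymm h1 zero_le
    have hnull : ∀ ρ : ℝ, S.μ (S.ball x₀ ρ) = 0 := by
      intro ρ
      obtain ⟨n, hn⟩ := pow_unbounded_of_one_lt (ρ / r) one_lt_two
      have hρ : ρ ≤ 2 ^ n * r := by
        have h1 := (div_lt_iff₀ hr).1 hn
        linarith
      exact le_antisymm
        (le_trans (measure_mono fun z hz => lt_of_lt_of_le hz hρ) (le_of_eq (hpow n)))
        zero_le
    have hzero : ∀ y : X,
        ENNReal.ofReal ((S.μ (S.ball x₀ (S.d x₀ y))).toReal ^ β x) = 0 := by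
      intro y
      rw [hnull (S.d x₀ y)]
      simp [Real.zero_rpow hβxne]
    have hz : (∫⁻ y in (S.ball x₀ r)ᶜ,
        ENNReal.ofReal ((S.μ (S.ball x₀ (S.d x₀ y))).toReal ^ β x) ∂S.μ) = 0 := by
      rw [lintegral_congr hzero, lintegral_zero]
    rw [hz]
    exact zero_le
  · have hMtop : M < ⊤ := S.ball_lt_top x₀ r
    set mr : ℝ := M.toReal with hmrdef
    have hmr : (0 : ℝ) < mr := ENNReal.toReal_pos hM0 hMtop.ne
    have hMr : M = ENNReal.ofReal mr := (ENNReal.ofReal_toReal hMtop.ne).symm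
    set bx : ℝ := (2 : ℝ) ^ (β x + 1) with hbxdef
    have hbx0 : (0 : ℝ) < bx := Real.rpow_pos_of_pos two_pos _
    have hmmeas : Measurable m := measurable_mBall S x₀
    set A : ℕ → Set X := fun k => m ⁻¹' (Set.Ico ((2 : ℝ≥0∞) ^ k * M) ((2 : ℝ≥0∞) ^ (k + 1) * M))
      with hAdef
    have hAk : ∀ k, MeasurableSet (A k) := fun k => hmmeas measurableSet_Ico
    have h2e : ∀ k : ℕ, ((2 : ℝ≥0∞)) ^ k = ENNReal.ofReal ((2 : ℝ) ^ k) := by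
      intro k
      rw [ENNReal.ofReal_pow (by norm_num : (0:ℝ) ≤ 2)]
      norm_num
    have hcover : (S.ball x₀ r)ᶜ ⊆ ⋃ k : ℕ, A k := by
      intro y hy
      have hyr : r ≤ S.d x₀ y := not_lt.1 hy
      have hge : M ≤ m y := measure_mono (fun z hz => lt_of_lt_of_le hz hyr)
      have hfin : m y < ⊤ := S.ball_lt_top x₀ _
      have hex : ∃ n : ℕ, m y < (2 : ℝ≥0∞) ^ (n + 1) * M := by
        obtain ⟨n, hn⟩ := pow_unbounded_of_one_lt ((m y).toReal / mr) one_lt_two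
        refine ⟨n, ?_⟩
        have hle : (2 : ℝ) ^ n ≤ 2 ^ (n + 1) := by
          have := pow_le_pow_right₀ (by norm_num : (1:ℝ) ≤ 2) (Nat.le_succ n)
          exact this
        have h1 : (m y).toReal < 2 ^ (n + 1) * mr := by
          have h2 := (div_lt_iff₀ hmr).1 hn
          nlinarith
        calc m y = ENNReal.ofReal (m y).toReal := (ENNReal.ofReal_toReal hfin.ne).symm
          _ < ENNReal.ofReal ((2 : ℝ) ^ (n + 1) * mr) :=
              (ENNReal.ofReal_lt_ofReal_iff (by positivity)).2 h1
          _ = (2 : ℝ≥0∞) ^ (n + 1) * M := by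
              rw [ENNReal.ofReal_mul (by positivity), ← h2e (n + 1), ← hMr]
      have hN := Nat.find_spec hex
      refine mem_iUnion.2 ⟨Nat.find hex, ?_, hN⟩
      rcases Nat.eq_zero_or_pos (Nat.find hex) with h0 | hpos
      · rw [h0]
        simpa using hge
      · obtain ⟨j, hj⟩ := Nat.exists_eq_succ_of_ne_zero hpos.ne'
        have hmin := Nat.find_min hex (by omega : j < Nat.find hex)
        rw [hj]
        exact not_lt.1 hmin
    have hstep : ∀ k : ℕ,
        (∫⁻ y in A k, ENNReal.ofReal ((m y).toReal ^ β x) ∂S.μ)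
          ≤ ENNReal.ofReal (2 * C * mr ^ (β x + 1)) * (ENNReal.ofReal bx) ^ k := by
      intro k
      have hconst : ∀ y ∈ A k,
          ENNReal.ofReal ((m y).toReal ^ β x)
            ≤ ENNReal.ofReal (((2 : ℝ) ^ k * mr) ^ β x) := by
        intro y hy
        apply ENNReal.ofReal_le_ofReal
        have hfin : m y < ⊤ := S.ball_lt_top x₀ _
        have h1 : ((2 : ℝ≥0∞) ^ k * M).toReal ≤ (m y).toReal :=
          ENNReal.toReal_mono hfin.ne hy.1
        have h2 : ((2 : ℝ≥0∞) ^ k * M).toReal = (2 : ℝ) ^ k * mr := by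
          rw [ENNReal.toReal_mul, ENNReal.toReal_pow]
          norm_num [hmrdef]
        rw [h2] at h1
        exact Real.rpow_le_rpow_of_nonpos (by positivity) h1 (by linarith)
      have hmain : S.μ (A k) ≤ ENNReal.ofReal C * ((2 : ℝ≥0∞) ^ (k + 1) * M) := by
        refine le_trans (measure_mono ?_) (dist_bound S x₀ C hC1 hdub1 ((2 : ℝ≥0∞) ^ (k + 1) * M))
        intro y hy
        exact hy.2
      have hkey : ((2 : ℝ) ^ k * mr) ^ β x * (C * ((2 : ℝ) ^ (k + 1) * mr))
          = (2 * C * mr ^ (β x + 1)) * bx ^ k := by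
        rw [Real.mul_rpow (by positivity) hmr.le]
        rw [← Real.rpow_natCast (2 : ℝ) k, ← Real.rpow_natCast (2 : ℝ) (k + 1),
          ← Real.rpow_natCast bx k, hbxdef,
          ← Real.rpow_mul (by norm_num : (0:ℝ) ≤ 2),
          ← Real.rpow_mul (by norm_num : (0:ℝ) ≤ 2)]
        push_cast
        have e1 : (β x + 1) * (k : ℝ) = (k : ℝ) * β x + (k : ℝ) := by ring
        have e2 : ((k : ℝ) + 1) = (k : ℝ) + 1 := rfl
        rw [e1, Real.rpow_add two_pos, Real.rpow_add two_pos,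
          Real.rpow_add_one hmr.ne' (β x), Real.rpow_one]
        ring
      calc (∫⁻ y in A k, ENNReal.ofReal ((m y).toReal ^ β x) ∂S.μ)
          ≤ ∫⁻ _ in A k, ENNReal.ofReal (((2 : ℝ) ^ k * mr) ^ β x) ∂S.μ :=
            setLIntegral_mono' (hAk k) hconst
        _ = ENNReal.ofReal (((2 : ℝ) ^ k * mr) ^ β x) * S.μ (A k) := setLIntegral_const _ _
        _ ≤ ENNReal.ofReal (((2 : ℝ) ^ k * mr) ^ β x)
              * (ENNReal.ofReal C * ((2 : ℝ≥0∞) ^ (k + 1) * M)) := mul_le_mul_right hmain _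
        _ = ENNReal.ofReal (((2 : ℝ) ^ k * mr) ^ β x * (C * ((2 : ℝ) ^ (k + 1) * mr))) := by
            rw [hMr, h2e (k + 1), ← ENNReal.ofReal_mul (by positivity),
              ← ENNReal.ofReal_mul hC0.le,
              ← ENNReal.ofReal_mul (Real.rpow_nonneg (by positivity) _)]
        _ = ENNReal.ofReal ((2 * C * mr ^ (β x + 1)) * bx ^ k) := by rw [hkey]
        _ = ENNReal.ofReal (2 * C * mr ^ (β x + 1)) * (ENNReal.ofReal bx) ^ k := by
            rw [ENNReal.ofReal_mul (by positivity), ENNReal.ofReal_pow hbx0.le]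
    have htail : (1 - ENNReal.ofReal bx)⁻¹ ≤ ENNReal.ofReal K := by
      have hbxb : bx ≤ b := Real.rpow_le_rpow_of_exponent_le one_le_two (by linarith)
      have h1 : ENNReal.ofReal (1 - b) ≤ 1 - ENNReal.ofReal bx := by
        rw [ENNReal.ofReal_sub 1 hb0.le, ENNReal.ofReal_one]
        exact tsub_le_tsub_left (ENNReal.ofReal_le_ofReal hbxb) 1
      calc (1 - ENNReal.ofReal bx)⁻¹ ≤ (ENNReal.ofReal (1 - b))⁻¹ := ENNReal.inv_le_inv' h1
        _ = ENNReal.ofReal K := by rw [← ENNReal.ofReal_inv_of_pos (by linarith)]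
    have hratio : δ ≤ (β x + 1) / β x := by
      rw [hδdef, ← neg_div_neg_eq, ← neg_div_neg_eq (β x + 1) (β x),
        div_le_div_iff₀ (by linarith) (by linarith)]
      nlinarith
    calc (∫⁻ y in (S.ball x₀ r)ᶜ,
            ENNReal.ofReal ((S.μ (S.ball x₀ (S.d x₀ y))).toReal ^ β x) ∂S.μ)
        ≤ ∫⁻ y in ⋃ k : ℕ, A k, ENNReal.ofReal ((m y).toReal ^ β x) ∂S.μ :=
          lintegral_mono_set hcover
      _ ≤ ∑' k : ℕ, ∫⁻ y in A k, ENNReal.ofReal ((m y).toReal ^ β x) ∂S.μ :=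
          lintegral_iUnion_le _ _
      _ ≤ ∑' k : ℕ, ENNReal.ofReal (2 * C * mr ^ (β x + 1)) * (ENNReal.ofReal bx) ^ k :=
          ENNReal.tsum_le_tsum hstep
      _ = ENNReal.ofReal (2 * C * mr ^ (β x + 1)) * (1 - ENNReal.ofReal bx)⁻¹ := by
          rw [ENNReal.tsum_mul_left, ENNReal.tsum_geometric]
      _ ≤ ENNReal.ofReal (2 * C * mr ^ (β x + 1)) * ENNReal.ofReal K :=
          mul_le_mul_right htail _
      _ = ENNReal.ofReal (c1 * mr ^ (β x + 1)) := by
          rw [← ENNReal.ofReal_mul (by positivity)]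
          congr 1
          rw [hc1def]
          ring
      _ ≤ ENNReal.ofReal (c1 / δ * ((β x + 1) / β x) * mr ^ (β x + 1)) := by
          apply ENNReal.ofReal_le_ofReal
          have hpow : (0 : ℝ) < mr ^ (β x + 1) := Real.rpow_pos_of_pos hmr _
          have hceq : c1 = c1 / δ * δ := by field_simp
          calc c1 * mr ^ (β x + 1) = (c1 / δ * δ) * mr ^ (β x + 1) := by rw [← hceq]
            _ ≤ (c1 / δ * ((β x + 1) / β x)) * mr ^ (β x + 1) := by
                apply mul_le_mul_of_nonneg_right _ hpow.le
                exact mul_le_mul_of_nonneg_left hratio (by positivity)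
end
end

section
/- Let (X,d,μ) be a space of homogeneous type whose measure satisfies the reverse doubling condition with constants A > 1 and B > 1. Let p be a μ-measurable function with 0 < p₋ ≤ p₊ < ∞ and suppose there is a point x₀ ∈ X such that p ∈ LH(X,x₀). Then there exist positive constants r₀ and C (possibly depending on x₀) such that for all 0 < r ≤ r₀: (μ(B_A))^{p₋(B_A) − p₊(B_A)} ≤ C, where B_A := B(x₀,Ar)∖B(x₀,r). -/
open MeasureTheory Set ENNReal

noncomputable section

open TwoWeight in
/-- Lemma 1.11. -/
theorem statement6 {X : Type*} [MeasurableSpace X] [Nonempty X]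
    (S : QMS X) (hdub : S.doubling) (A B : ℝ) (hA : 1 < A) (hB : 1 < B)
    (hrd : S.revDoubling A B)
    (p : X → ℝ) (hpm : Measurable p)
    (hlow : 0 < infOn p Set.univ) (hbdd : BddAbove (Set.range p))
    (x₀ : X) (hLH : S.LHAt p x₀) :
    ∃ r₀ C : ℝ, 0 < r₀ ∧ 0 < C ∧ ∀ r : ℝ, 0 < r → r ≤ r₀ →
      (S.μ (S.ball x₀ (A * r) \ S.ball x₀ r)).toReal ^
          (infOn p (S.ball x₀ (A * r) \ S.ball x₀ r) -
            supOn p (S.ball x₀ (A * r) \ S.ball x₀ r)) ≤ C := by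
  classical
  obtain ⟨b, c, hb, hc, hLHc⟩ := hLH
  have hA0 : (0:ℝ) < A := lt_trans one_pos hA
  have hB0 : (0:ℝ) < B := lt_trans one_pos hB
  -- a small ball with measure ≤ 1/2
  obtain ⟨r₁, hr₁, hsmall⟩ : ∃ r₁ : ℝ, 0 < r₁ ∧ S.μ (S.ball x₀ r₁) ≤ (1/2 : ℝ≥0∞) := by
    have hmono : Antitone (fun n : ℕ => S.ball x₀ ((n+1 : ℝ)⁻¹)) := by
      intro m n hmn y hy
      simp only [QMS.ball, Set.mem_setOf_eq] at hy ⊢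
      have h2 : ((n:ℝ)+1)⁻¹ ≤ ((m:ℝ)+1)⁻¹ := by
        apply inv_anti₀ (by positivity)
        have : (m:ℝ) ≤ (n:ℝ) := Nat.cast_le.2 hmn
        linarith
      linarith
    have hinter : (⋂ n : ℕ, S.ball x₀ ((n+1 : ℝ)⁻¹)) = {x₀} := by
      ext y
      simp only [Set.mem_iInter, Set.mem_singleton_iff]
      constructor
      · intro h
        have hd0 : S.d x₀ y ≤ 0 := by
          by_contra hpos
          push_neg at hpos
          obtain ⟨n, hn⟩ := exists_nat_gt (S.d x₀ y)⁻¹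
          have h1 : ((n:ℝ)+1)⁻¹ < S.d x₀ y := by
            rw [inv_lt_comm₀ (by positivity) hpos]
            exact lt_trans hn (by linarith)
          exact absurd (h n) (by simp [QMS.ball]; linarith)
        have := (S.d_eq_zero_iff x₀ y).1 (le_antisymm hd0 (S.d_nonneg x₀ y))
        exact this.symm
      · intro h n
        have hdd : S.d x₀ y = 0 := (S.d_eq_zero_iff x₀ y).2 h.symm
        simp only [QMS.ball, Set.mem_setOf_eq, hdd]
        positivity
    have hmeas : ∀ n : ℕ, NullMeasurableSet (S.ball x₀ ((n+1 : ℝ)⁻¹)) S.μ :=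
      fun n => (S.ball_measurable x₀ _).nullMeasurableSet
    have hfin : ∃ n : ℕ, S.μ (S.ball x₀ ((n+1 : ℝ)⁻¹)) ≠ ⊤ :=
      ⟨0, (S.ball_lt_top x₀ _).ne⟩
    have htend := MeasureTheory.tendsto_measure_iInter_atTop hmeas hmono hfin
    rw [hinter, S.singleton_null] at htend
    have hev := htend.eventually_lt_const (show (0:ℝ≥0∞) < 1/2 by norm_num)
    obtain ⟨n, hn⟩ := hev.exists
    exact ⟨((n:ℝ)+1)⁻¹, by positivity, hn.le⟩
  set K : ℝ := 2*c*(1 + Real.log (B/(B-1)) / Real.log 2) with hK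
  refine ⟨min (r₁/A) (b/A), max 1 (Real.exp K), lt_min (by positivity) (by positivity),
    lt_of_lt_of_le one_pos (le_max_left _ _), ?_⟩
  intro r hr hrr₀
  have hAr1 : A * r ≤ r₁ := by
    have := le_trans hrr₀ (min_le_left _ _)
    calc A * r ≤ A * (r₁/A) := mul_le_mul_of_nonneg_left this hA0.le
    _ = r₁ := by field_simp
  have hArb : A * r ≤ b := by
    have := le_trans hrr₀ (min_le_right _ _)
    calc A * r ≤ A * (b/A) := mul_le_mul_of_nonneg_left this hA0.le
    _ = b := by field_simp
  set E := S.ball x₀ (A*r) \ S.ball x₀ r with hE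
  have hsub : S.ball x₀ r ⊆ S.ball x₀ (A*r) := fun y hy =>
    lt_of_lt_of_le hy (le_mul_of_one_le_left hr.le hA.le)
  have hEsub : E ⊆ S.ball x₀ (A*r) := Set.diff_subset
  have hBAfin : S.μ (S.ball x₀ (A*r)) ≠ ⊤ := (S.ball_lt_top x₀ _).ne
  have hBAr1 : S.ball x₀ (A*r) ⊆ S.ball x₀ r₁ := fun y hy => lt_of_lt_of_le hy hAr1
  have hMA_le : (S.μ (S.ball x₀ (A*r))).toReal ≤ 1/2 := by
    have h1 : S.μ (S.ball x₀ (A*r)) ≤ (1/2 : ℝ≥0∞) :=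
      le_trans (measure_mono hBAr1) hsmall
    have := ENNReal.toReal_mono (by norm_num) h1
    simpa using this
  by_cases hE0 : S.μ E = 0
  · rw [hE0]
    simp only [ENNReal.toReal_zero]
    rcases eq_or_ne (infOn p E - supOn p E) 0 with h | h
    · rw [h, Real.rpow_zero]; exact le_max_left _ _
    · rw [Real.zero_rpow h]
      exact le_trans zero_le_one (le_max_left _ _)
  · set m : ℝ := (S.μ E).toReal with hmdef
    set MA : ℝ := (S.μ (S.ball x₀ (A*r))).toReal with hMAdef
    have hEfin : S.μ E ≠ ⊤ := (lt_of_le_of_lt (measure_mono hEsub) (S.ball_lt_top x₀ _)).ne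
    have hm0 : 0 < m := ENNReal.toReal_pos hE0 hEfin
    have hMA0 : 0 < MA := by
      apply ENNReal.toReal_pos _ hBAfin
      intro h
      exact hE0 (le_antisymm (le_trans (measure_mono hEsub) h.le) zero_le)
    have hmMA : m ≤ MA := ENNReal.toReal_mono hBAfin (measure_mono hEsub)
    have hm_half : m ≤ 1/2 := le_trans hmMA hMA_le
    set Λ : ℝ := -Real.log MA with hΛdef
    have hΛ : Real.log 2 ≤ Λ := by
      have h1 : Real.log MA ≤ Real.log (1/2) := Real.log_le_log hMA0 hMA_le
      rw [one_div, Real.log_inv] at h1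
      linarith
    have hlog2 : (0:ℝ) < Real.log 2 := Real.log_pos one_lt_two
    have hΛpos : 0 < Λ := lt_of_lt_of_le hlog2 hΛ
    have hEne : E.Nonempty := MeasureTheory.nonempty_of_measure_ne_zero hE0
    -- key pointwise estimate
    have key : ∀ y ∈ E, |p x₀ - p y| ≤ c / Λ := by
      intro y hy
      have hd1 : S.d x₀ y < A*r := hy.1
      have hdb : S.d x₀ y ≤ b := le_trans hd1.le hArb
      have h1 := hLHc y hdb
      have hub : S.mB x₀ y ≤ MA := by
        apply ENNReal.toReal_mono hBAfin
        exact measure_mono (fun z hz => lt_trans hz hd1)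
      by_cases ht : S.mB x₀ y = 0
      · rw [ht] at h1
        simp only [Real.log_zero, neg_zero, _root_.div_zero] at h1
        exact le_trans h1 (div_nonneg hc.le hΛpos.le)
      · have ht0 : 0 < S.mB x₀ y := lt_of_le_of_ne ENNReal.toReal_nonneg (Ne.symm ht)
        have h2 : Λ ≤ -Real.log (S.mB x₀ y) := neg_le_neg (Real.log_le_log ht0 hub)
        exact le_trans h1 (div_le_div_of_nonneg_left hc.le hΛpos h2)
    have hpx₀ : 0 < p x₀ := by
      have hbb : BddBelow (p '' Set.univ) := by
        by_contra hnb
        rw [infOn, Real.sInf_of_not_bddBelow hnb] at hlow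
        exact lt_irrefl 0 hlow
      have := csInf_le hbb ⟨x₀, Set.mem_univ _, rfl⟩
      calc (0:ℝ) < infOn p Set.univ := hlow
      _ ≤ p x₀ := this
    have hsup : supOn p E ≤ p x₀ + c/Λ := by
      apply Real.sSup_le
      · rintro _ ⟨y, hy, rfl⟩
        have h := (abs_le.1 (key y hy)).1
        linarith
      · positivity
    have hinf : p x₀ - c/Λ ≤ infOn p E := by
      apply le_csInf (hEne.image p)
      rintro _ ⟨y, hy, rfl⟩
      have h := (abs_le.1 (key y hy)).2
      linarith
    have he_ge : -(2*c/Λ) ≤ infOn p E - supOn p E := by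
      have : 2*c/Λ = c/Λ + c/Λ := by ring
      linarith
    -- reverse doubling
    set u : ℝ := (S.μ (S.ball x₀ r)).toReal with hudef
    have huB : B * u ≤ MA := by
      have h1 := ENNReal.toReal_mono hBAfin (hrd x₀ r hr)
      rwa [ENNReal.toReal_mul, ENNReal.toReal_ofReal hB0.le] at h1
    have hufin : S.μ (S.ball x₀ r) ≠ ⊤ := (S.ball_lt_top x₀ r).ne
    have hm_eq : m = MA - u := by
      rw [hmdef, hE, measure_diff hsub (S.ball_measurable x₀ r).nullMeasurableSet hufin,
        ENNReal.toReal_sub_of_le (measure_mono hsub) hBAfin]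
    have hu0 : 0 ≤ u := ENNReal.toReal_nonneg
    have hmlb : (B-1)/B * MA ≤ m := by
      rw [hm_eq]
      have hu_le : u ≤ MA/B := by
        rw [le_div_iff₀ hB0]; nlinarith
      have heq : (B-1)/B * MA = MA - MA/B := by field_simp
      linarith
    have hlogB' : 0 ≤ Real.log (B/(B-1)) := by
      apply Real.log_nonneg
      rw [le_div_iff₀ (by linarith)]; linarith
    have hmD : -Real.log m ≤ Λ + Real.log (B/(B-1)) := by
      have hβ : 0 < (B-1)/B * MA := by
        apply mul_pos _ hMA0
        apply div_pos (by linarith) hB0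
      have h1 : Real.log ((B-1)/B * MA) ≤ Real.log m := Real.log_le_log hβ hmlb
      have h2 : Real.log ((B-1)/B * MA) = Real.log ((B-1)/B) + Real.log MA :=
        Real.log_mul (div_pos (by linarith) hB0).ne' hMA0.ne'
      have h3 : Real.log (B/(B-1)) = -Real.log ((B-1)/B) := by
        rw [← Real.log_inv]
        congr 1
        field_simp
      rw [h2] at h1
      rw [h3, hΛdef]
      linarith
    -- final chain
    have step1 : m ^ (infOn p E - supOn p E) ≤ m ^ (-(2*c/Λ)) :=
      Real.rpow_le_rpow_of_exponent_ge hm0 (by linarith) he_ge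
    have step2 : m ^ (-(2*c/Λ)) = Real.exp (-(2*c/Λ) * Real.log m) := by
      rw [Real.rpow_def_of_pos hm0]
      ring_nf
    have step3 : -(2*c/Λ) * Real.log m ≤ K := by
      have hD : -(2*c/Λ) * Real.log m = (2*c/Λ) * (-Real.log m) := by ring
      rw [hD]
      have hA1 : (2*c/Λ) * (-Real.log m) ≤ (2*c/Λ) * (Λ + Real.log (B/(B-1))) :=
        mul_le_mul_of_nonneg_left hmD (by positivity)
      have hA2 : (2*c/Λ) * (Λ + Real.log (B/(B-1))) = 2*c + 2*c*Real.log (B/(B-1))/Λ := by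
        field_simp
      have hA3 : 2*c*Real.log (B/(B-1))/Λ ≤ 2*c*Real.log (B/(B-1))/Real.log 2 :=
        div_le_div_of_nonneg_left (mul_nonneg (by positivity) hlogB') hlog2 hΛ
      rw [hK]
      calc (2*c/Λ) * (-Real.log m) ≤ 2*c + 2*c*Real.log (B/(B-1))/Λ := by
            rw [← hA2]; exact hA1
      _ ≤ 2*c + 2*c*Real.log (B/(B-1))/Real.log 2 := by linarith
      _ = 2*c*(1 + Real.log (B/(B-1)) / Real.log 2) := by ring
    calc m ^ (infOn p E - supOn p E) ≤ m ^ (-(2*c/Λ)) := step1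
    _ = Real.exp (-(2*c/Λ) * Real.log m) := step2
    _ ≤ Real.exp K := Real.exp_le_exp.2 step3
    _ ≤ max 1 (Real.exp K) := le_max_right _ _
end
end

section
/- Let (X,d,μ) be a space of homogeneous type whose measure satisfies the reverse doubling condition with constants A > 1 and B > 1. Let p, q be μ-measurable with 1 < p₋ ≤ p(x) ≤ q(x) ≤ q₊ < ∞ for all x ∈ X, and suppose there is a point x₀ ∈ X such that p, q ∈ LH(X,x₀). If L = ∞, assume p ≡ p_c and q ≡ q_c are constant outside some ball B(x₀,a). Then there exists a constant C > 0 such that for all f ∈ L^{p(·)}(X) and g ∈ L^{q'(·)}(X): Σ_{k∈ℤ} ‖f·χ_{I_{2,k}}‖_{L^{p(·)}(X)}·‖g·χ_{I_{2,k}}‖_{L^{q'(·)}(X)} ≤ C·‖f‖_{L^{p(·)}(X)}·‖g‖_{L^{q'(·)}(X)}. -/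
open MeasureTheory Set ENNReal

noncomputable section

namespace TwoWeight

namespace QMS

variable {X : Type*} [MeasurableSpace X] (S : QMS X)

lemma vnorm_nonneg (e f : X → ℝ) : 0 ≤ S.VNorm e f :=
  Real.sInf_nonneg (fun _ hl => hl.1.le)

lemma modular_mono {e : X → ℝ} (he : ∀ x, 0 ≤ e x) {f g : X → ℝ}
    (h : ∀ x, |f x| ≤ |g x|) : S.modular e f ≤ S.modular e g :=
  lintegral_mono fun x => ENNReal.ofReal_le_ofReal
    (Real.rpow_le_rpow (abs_nonneg _) (h x) (he x))

lemma modular_div_mono {e : X → ℝ} (he : ∀ x, 0 ≤ e x) (f : X → ℝ) {l Λ : ℝ}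
    (hl : 0 < l) (hlΛ : l ≤ Λ) :
    S.modular e (fun x => f x / Λ) ≤ S.modular e (fun x => f x / l) := by
  apply S.modular_mono he
  intro x
  rw [abs_div, abs_div, abs_of_pos hl, abs_of_pos (lt_of_lt_of_le hl hlΛ)]
  exact div_le_div_of_nonneg_left (abs_nonneg _) hl hlΛ

lemma exists_modular_le_one {e : X → ℝ} {el : ℝ} (hel : 0 < el)
    (he : ∀ x, el ≤ e x) {f : X → ℝ} (hf : S.MemVL e f) :
    ∃ l : ℝ, 0 < l ∧ S.modular e (fun x => f x / l) ≤ 1 := by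
  set m : ℝ≥0∞ := S.modular e f with hm
  set l : ℝ := max 1 ((m.toReal + 1) ^ (1 / el)) with hldef
  have hm0 : 0 ≤ m.toReal := ENNReal.toReal_nonneg
  have hl1 : (1 : ℝ) ≤ l := le_max_left _ _
  have hl0 : 0 < l := lt_of_lt_of_le one_pos hl1
  refine ⟨l, hl0, ?_⟩
  have hlel : m.toReal + 1 ≤ l ^ el := by
    calc m.toReal + 1 = ((m.toReal + 1) ^ (1 / el)) ^ el := by
          rw [← Real.rpow_mul (by linarith), one_div, inv_mul_cancel₀ hel.ne',
            Real.rpow_one]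
      _ ≤ l ^ el := Real.rpow_le_rpow (Real.rpow_nonneg (by linarith) _)
          (le_max_right _ _) hel.le
  have key : S.modular e (fun x => f x / l) ≤ ENNReal.ofReal ((l ^ el)⁻¹) * m := by
    have hpt : ∀ x, ENNReal.ofReal (|f x / l| ^ e x) ≤
        ENNReal.ofReal ((l ^ el)⁻¹) * ENNReal.ofReal (|f x| ^ e x) := by
      intro x
      rw [← ENNReal.ofReal_mul (by positivity)]
      apply ENNReal.ofReal_le_ofReal
      rw [abs_div, abs_of_pos hl0, Real.div_rpow (abs_nonneg _) hl0.le]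
      rw [div_eq_mul_inv, mul_comm]
      apply mul_le_mul_of_nonneg_right ?_ (Real.rpow_nonneg (abs_nonneg _) _)
      apply inv_anti₀ (Real.rpow_pos_of_pos hl0 _)
      exact Real.rpow_le_rpow_of_exponent_le hl1 (he x)
    calc S.modular e (fun x => f x / l) ≤
        ∫⁻ x, ENNReal.ofReal ((l ^ el)⁻¹) * ENNReal.ofReal (|f x| ^ e x) ∂S.μ :=
          lintegral_mono hpt
      _ = ENNReal.ofReal ((l ^ el)⁻¹) * m :=
          lintegral_const_mul' _ _ ENNReal.ofReal_ne_top
  refine key.trans ?_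
  have hmne : m ≠ ⊤ := hf.ne
  rw [← ENNReal.ofReal_toReal hmne, ← ENNReal.ofReal_mul (by positivity)]
  apply ENNReal.ofReal_le_one.mpr
  have hle : (l ^ el)⁻¹ ≤ (m.toReal + 1)⁻¹ := by
    apply inv_anti₀ (by linarith)
    exact hlel
  calc (l ^ el)⁻¹ * m.toReal ≤ (m.toReal + 1)⁻¹ * m.toReal :=
        mul_le_mul_of_nonneg_right hle hm0
    _ ≤ 1 := by
        rw [inv_mul_le_iff₀ (by linarith)]
        linarith

lemma vnorm_le_of_mem {e f : X → ℝ} {l : ℝ} (hl : 0 < l)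
    (h : S.modular e (fun x => f x / l) ≤ 1) : S.VNorm e f ≤ l :=
  csInf_le ⟨0, fun _ hx => hx.1.le⟩ ⟨hl, h⟩

lemma modular_le_one_of_lt {e : X → ℝ} {el : ℝ} (hel : 0 < el)
    (he : ∀ x, el ≤ e x) {f : X → ℝ} (hf : S.MemVL e f) {Λ : ℝ}
    (hΛ : S.VNorm e f < Λ) : S.modular e (fun x => f x / Λ) ≤ 1 := by
  obtain ⟨l0, hl0⟩ := S.exists_modular_le_one hel he hf
  obtain ⟨l, hlmem, hlΛ⟩ := exists_lt_of_csInf_lt ⟨l0, hl0⟩ hΛ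
  exact le_trans (S.modular_div_mono (fun x => le_trans hel.le (he x)) f
    hlmem.1 hlΛ.le) hlmem.2

lemma vnorm_nonpos {e : X → ℝ} {f : X → ℝ}
    (h : ∀ l : ℝ, 0 < l → S.VNorm e f ≤ l) : S.VNorm e f = 0 := by
  refine le_antisymm ?_ (S.vnorm_nonneg e f)
  by_contra hc
  push_neg at hc
  exact absurd (h _ (half_pos hc)) (by linarith)

lemma vnorm_le_rpow {e : X → ℝ} (he : ∀ x, 0 < e x) {f : X → ℝ} {Λ P : ℝ}
    (hΛ : 0 < Λ) (hP : 0 < P) (heP : ∀ x, f x ≠ 0 → e x ≤ P)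
    (hm : S.modular e (fun x => f x / Λ) ≤ 1) :
    S.VNorm e f ≤ Λ * (S.modular e (fun x => f x / Λ)).toReal ^ (1 / P) := by
  set m : ℝ≥0∞ := S.modular e (fun x => f x / Λ) with hmdef
  have hmtop : m ≠ ⊤ := (lt_of_le_of_lt hm one_lt_top).ne
  by_cases hm0 : m = 0
  · -- norm is zero
    have hz : S.VNorm e f = 0 := by
      apply S.vnorm_nonpos
      intro l hl
      apply S.vnorm_le_of_mem hl
      set C : ℝ := max 1 ((Λ / l) ^ P) with hC
      have hC0 : 0 ≤ C := le_trans zero_le_one (le_max_left _ _)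
      have hpt : ∀ x, ENNReal.ofReal (|f x / l| ^ e x) ≤
          ENNReal.ofReal C * ENNReal.ofReal (|f x / Λ| ^ e x) := by
        intro x
        by_cases hfx : f x = 0
        · simp [hfx, Real.zero_rpow (he x).ne']
        · rw [← ENNReal.ofReal_mul hC0]
          apply ENNReal.ofReal_le_ofReal
          have h1 : f x / l = (f x / Λ) * (Λ / l) := by
            field_simp
          rw [h1, abs_mul, Real.mul_rpow (abs_nonneg _) (abs_nonneg _),
            abs_of_pos (div_pos hΛ hl), mul_comm]
          apply mul_le_mul_of_nonneg_right ?_ (Real.rpow_nonneg (abs_nonneg _) _)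
          rcases le_or_gt 1 (Λ / l) with h2 | h2
          · exact le_trans (Real.rpow_le_rpow_of_exponent_le h2 (heP x hfx))
              (le_max_right _ _)
          · exact le_trans (Real.rpow_le_one (div_pos hΛ hl).le h2.le (he x).le)
              (le_max_left _ _)
      calc S.modular e (fun x => f x / l) ≤
          ∫⁻ x, ENNReal.ofReal C * ENNReal.ofReal (|f x / Λ| ^ e x) ∂S.μ :=
            lintegral_mono hpt
        _ = ENNReal.ofReal C * m := lintegral_const_mul' _ _ ENNReal.ofReal_ne_top
        _ = 0 := by rw [hm0, mul_zero]
        _ ≤ 1 := zero_le_one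
    rw [hz]
    positivity
  · -- main case
    have hmr0 : 0 < m.toReal := ENNReal.toReal_pos hm0 hmtop
    have hmr1 : m.toReal ≤ 1 := by
      rw [← ENNReal.toReal_one]
      exact ENNReal.toReal_mono one_ne_top hm
    set lam : ℝ := m.toReal ^ (1 / P) with hlam
    have hlam0 : 0 < lam := Real.rpow_pos_of_pos hmr0 _
    have hlam1 : lam ≤ 1 := Real.rpow_le_one hmr0.le hmr1 (by positivity)
    apply S.vnorm_le_of_mem (by positivity)
    have hpt : ∀ x, ENNReal.ofReal (|f x / (Λ * lam)| ^ e x) ≤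
        ENNReal.ofReal ((lam ^ P)⁻¹) * ENNReal.ofReal (|f x / Λ| ^ e x) := by
      intro x
      by_cases hfx : f x = 0
      · simp [hfx, Real.zero_rpow (he x).ne']
      · rw [← ENNReal.ofReal_mul (by positivity)]
        apply ENNReal.ofReal_le_ofReal
        have h1 : f x / (Λ * lam) = (f x / Λ) * lam⁻¹ := by
          field_simp
        rw [h1, abs_mul, Real.mul_rpow (abs_nonneg _) (abs_nonneg _),
          abs_of_pos (inv_pos.mpr hlam0), mul_comm]
        apply mul_le_mul_of_nonneg_right ?_ (Real.rpow_nonneg (abs_nonneg _) _)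
        have h2 : (1:ℝ) ≤ lam⁻¹ := (one_le_inv₀ hlam0).mpr hlam1
        calc lam⁻¹ ^ e x ≤ lam⁻¹ ^ P :=
              Real.rpow_le_rpow_of_exponent_le h2 (heP x hfx)
          _ = (lam ^ P)⁻¹ := by rw [← Real.inv_rpow hlam0.le]
    have key : S.modular e (fun x => f x / (Λ * lam)) ≤
        ENNReal.ofReal ((lam ^ P)⁻¹) * m := by
      calc S.modular e (fun x => f x / (Λ * lam)) ≤
          ∫⁻ x, ENNReal.ofReal ((lam ^ P)⁻¹) * ENNReal.ofReal (|f x / Λ| ^ e x) ∂S.μ :=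
            lintegral_mono hpt
        _ = _ := lintegral_const_mul' _ _ ENNReal.ofReal_ne_top
    refine key.trans ?_
    have hlamP : lam ^ P = m.toReal := by
      rw [hlam, ← Real.rpow_mul hmr0.le, one_div, inv_mul_cancel₀ hP.ne',
        Real.rpow_one]
    rw [hlamP]
    calc ENNReal.ofReal m.toReal⁻¹ * m
        = ENNReal.ofReal m.toReal⁻¹ * ENNReal.ofReal m.toReal := by
          rw [ENNReal.ofReal_toReal hmtop]
      _ = ENNReal.ofReal (m.toReal⁻¹ * m.toReal) := by
          rw [ENNReal.ofReal_mul (by positivity)]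
      _ ≤ 1 := by rw [inv_mul_cancel₀ hmr0.ne']; simp

lemma modular_indicator_eq {e : X → ℝ} (he : ∀ x, 0 < e x) (f : X → ℝ)
    (E : Set X) (Λ : ℝ) :
    S.modular e (fun x => E.indicator f x / Λ) =
      ∫⁻ x, E.indicator (fun y => ENNReal.ofReal (|f y / Λ| ^ e y)) x ∂S.μ := by
  unfold modular
  congr 1
  funext x
  by_cases hx : x ∈ E
  · simp [Set.indicator_of_mem hx]
  · simp [Set.indicator_of_notMem hx, Real.zero_rpow (he x).ne']

lemma sum_lintegral_le {ι : Type*} (F : Finset ι) (h : ι → X → ℝ≥0∞) :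
    ∑ k ∈ F, ∫⁻ x, h k x ∂S.μ ≤ ∫⁻ x, ∑ k ∈ F, h k x ∂S.μ := by
  classical
  induction F using Finset.cons_induction with
  | empty => simp
  | cons k F hk ih =>
    rw [Finset.sum_cons]
    calc (∫⁻ x, h k x ∂S.μ) + ∑ j ∈ F, ∫⁻ x, h j x ∂S.μ ≤
        (∫⁻ x, h k x ∂S.μ) + ∫⁻ x, ∑ j ∈ F, h j x ∂S.μ := add_le_add le_rfl ih
      _ ≤ ∫⁻ x, (h k x + ∑ j ∈ F, h j x) ∂S.μ := le_lintegral_add _ _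
      _ = _ := by
          congr 1
          funext x
          rw [Finset.sum_cons]

lemma vnorm_eq_zero_of_univ_null (h : S.μ Set.univ = 0) (e f : X → ℝ) :
    S.VNorm e f = 0 := by
  apply S.vnorm_nonpos
  intro l hl
  apply S.vnorm_le_of_mem hl
  calc S.modular e (fun x => f x / l) ≤ ∫⁻ _, (⊤ : ℝ≥0∞) ∂S.μ :=
        lintegral_mono fun _ => le_top
    _ = 0 := by rw [lintegral_const, h, mul_zero]
    _ ≤ 1 := zero_le_one

end QMS

end TwoWeight

namespace TwoWeight

lemma one_lt_conj {t : ℝ} (h : 1 < t) : 1 < conj t := by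
  unfold conj
  rw [lt_div_iff₀ (by linarith)]
  linarith

lemma conj_anti {t s : ℝ} (ht : 1 < t) (hts : t ≤ s) : conj s ≤ conj t := by
  unfold conj
  rw [div_le_div_iff₀ (by linarith) (by linarith)]
  nlinarith

lemma one_div_conj {t : ℝ} (h : 1 < t) : 1 / conj t = 1 - 1 / t := by
  unfold conj
  field_simp

lemma tw_large_bound {mb nb u v : ℝ} (hm : 0 ≤ mb) (hm1 : mb ≤ 1)
    (hn : 0 ≤ nb) (hn1 : nb ≤ 1) (hu : 0 < u) (hv : 0 < v)
    (hsig : 1 ≤ 1/u + 1/v) :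
    mb ^ (1/u) * nb ^ (1/v) ≤ mb + nb := by
  set Xm : ℝ := max mb nb with hX
  have hX0 : 0 ≤ Xm := le_trans hm (le_max_left _ _)
  have hX1 : Xm ≤ 1 := max_le hm1 hn1
  rcases eq_or_lt_of_le hX0 with h0 | h0
  · have hmb : mb = 0 := le_antisymm (le_trans (le_max_left _ _) h0.symm.le) hm
    rw [hmb, Real.zero_rpow (by positivity), zero_mul]
    positivity
  · have hstep1 : mb ^ (1/u) * nb ^ (1/v) ≤ Xm ^ (1/u + 1/v) := by
      have g1 : mb ^ (1/u) ≤ Xm ^ (1/u) :=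
        Real.rpow_le_rpow hm (le_max_left _ _) (by positivity)
      have g2 : nb ^ (1/v) ≤ Xm ^ (1/v) :=
        Real.rpow_le_rpow hn (le_max_right _ _) (by positivity)
      have g3 : Xm ^ (1/u) * Xm ^ (1/v) = Xm ^ (1/u + 1/v) := (Real.rpow_add h0 _ _).symm
      calc mb ^ (1/u) * nb ^ (1/v) ≤ Xm ^ (1/u) * Xm ^ (1/v) :=
            mul_le_mul g1 g2 (by positivity) (by positivity)
        _ = _ := g3
    have hstep2 : Xm ^ (1/u + 1/v) ≤ Xm := by
      have := Real.rpow_le_rpow_of_exponent_ge h0 hX1 hsig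
      rwa [Real.rpow_one] at this
    have hstep3 : Xm ≤ mb + nb := by
      rcases max_cases mb nb with ⟨h,_⟩|⟨h,_⟩ <;> rw [hX, h] <;> linarith
    linarith

lemma tw_small_bound {mb nb nu c0 del u v : ℝ}
    (hm : 0 ≤ mb) (hm1 : mb ≤ 1) (hn : 0 ≤ nb) (hn1 : nb ≤ 1)
    (hnu : 0 ≤ nu) (hnu1 : nu < 1)
    (hc0 : 0 < c0) (hdel : del = c0 / (-Real.log nu))
    (hdel8 : del ≤ 1/8) (hdel0 : 0 ≤ del)
    (hu : 0 < u) (hv : 0 < v) (hsig : 1 - 2*del ≤ 1/u + 1/v) :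
    mb ^ (1/u) * nb ^ (1/v) ≤ Real.exp c0 * (mb + nb) + nu ^ ((4:ℝ)⁻¹) := by
  have hnu4 : 0 ≤ nu ^ ((4:ℝ)⁻¹) := Real.rpow_nonneg hnu _
  set Xm : ℝ := max mb nb with hX
  have hX0 : 0 ≤ Xm := le_trans hm (le_max_left _ _)
  have hX1 : Xm ≤ 1 := max_le hm1 hn1
  have hXmn : Xm ≤ mb + nb := by
    rcases max_cases mb nb with ⟨h,_⟩|⟨h,_⟩ <;> rw [hX, h] <;> linarith
  rcases eq_or_lt_of_le hX0 with h0 | h0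
  · have hmb : mb = 0 := le_antisymm (le_trans (le_max_left _ _) h0.symm.le) hm
    rw [hmb, Real.zero_rpow (by positivity), zero_mul]
    positivity
  · have hstep1 : mb ^ (1/u) * nb ^ (1/v) ≤ Xm ^ (1/u + 1/v) := by
      calc mb ^ (1/u) * nb ^ (1/v) ≤ Xm ^ (1/u) * Xm ^ (1/v) := by
            apply mul_le_mul (Real.rpow_le_rpow hm (le_max_left _ _) (by positivity))
              (Real.rpow_le_rpow hn (le_max_right _ _) (by positivity))
              (by positivity) (by positivity)
        _ = Xm ^ (1/u + 1/v) := (Real.rpow_add h0 _ _).symm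
    have hXs : Xm ^ (1/u + 1/v) ≤ Xm ^ (1 - 2*del) :=
      Real.rpow_le_rpow_of_exponent_ge h0 hX1 hsig
    rcases le_or_gt (nu ^ ((2:ℝ)⁻¹)) Xm with hcase | hcase
    · -- big X case
      have hfac : Xm ^ (-(2*del)) ≤ Real.exp c0 := by
        rcases eq_or_lt_of_le hnu with hnu0 | hnu0
        · -- nu = 0, then del = 0
          have hdz : del = 0 := by
            rw [hdel, ← hnu0]
            simp
          rw [hdz]
          have h1e : (1:ℝ) ≤ Real.exp c0 := by
            rw [← Real.exp_zero]
            exact Real.exp_le_exp.mpr hc0.le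
          simpa using h1e
        · have hs0 : 0 < nu ^ ((2:ℝ)⁻¹) := Real.rpow_pos_of_pos hnu0 _
          have hlog : 0 < -Real.log nu := by
            rw [neg_pos]
            exact Real.log_neg hnu0 hnu1
          have h1 : Xm ^ (-(2*del)) ≤ (nu ^ ((2:ℝ)⁻¹)) ^ (-(2*del)) := by
            rw [Real.rpow_neg hX0, Real.rpow_neg hs0.le]
            apply inv_anti₀ (Real.rpow_pos_of_pos hs0 _)
            exact Real.rpow_le_rpow hs0.le hcase (by positivity)
          have h2 : (nu ^ ((2:ℝ)⁻¹)) ^ (-(2*del)) = nu ^ (-del) := by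
            rw [← Real.rpow_mul hnu]
            congr 1
            ring
          have h3 : nu ^ (-del) = Real.exp c0 := by
            have hln : Real.log nu ≠ 0 := by
              intro hc
              rw [hc] at hlog
              simp at hlog
            rw [Real.rpow_def_of_pos hnu0, hdel]
            congr 1
            field_simp
          rw [h2, h3] at h1
          exact h1
      have : Xm ^ (1 - 2*del) = Xm * Xm ^ (-(2*del)) := by
        rw [← Real.rpow_one_add' h0.le (by intro hc; nlinarith)]
        ring_nf
      calc mb ^ (1/u) * nb ^ (1/v) ≤ Xm ^ (1 - 2*del) := hstep1.trans hXs
        _ = Xm * Xm ^ (-(2*del)) := this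
        _ ≤ Xm * Real.exp c0 := mul_le_mul_of_nonneg_left hfac hX0
        _ ≤ Real.exp c0 * (mb + nb) := by
            rw [mul_comm]
            exact mul_le_mul_of_nonneg_left hXmn (Real.exp_pos _).le
        _ ≤ _ := by linarith
    · -- small X case
      have hnu0 : 0 < nu := by
        by_contra hc
        push_neg at hc
        have : nu = 0 := le_antisymm hc hnu
        rw [this, Real.zero_rpow (by norm_num)] at hcase
        linarith
      have h1 : Xm ^ (1 - 2*del) ≤ (nu ^ ((2:ℝ)⁻¹)) ^ (1 - 2*del) :=
        Real.rpow_le_rpow hX0 hcase.le (by linarith)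
      have h2 : (nu ^ ((2:ℝ)⁻¹)) ^ (1 - 2*del) = nu ^ ((1 - 2*del)/2) := by
        rw [← Real.rpow_mul hnu]
        congr 1
        ring
      have h3 : nu ^ ((1 - 2*del)/2) ≤ nu ^ ((4:ℝ)⁻¹) := by
        apply Real.rpow_le_rpow_of_exponent_ge hnu0 hnu1.le
        linarith
      calc mb ^ (1/u) * nb ^ (1/v) ≤ Xm ^ (1 - 2*del) := hstep1.trans hXs
        _ ≤ nu ^ ((4:ℝ)⁻¹) := by rw [h2] at h1; exact h1.trans h3
        _ ≤ _ := by
            have : (0:ℝ) ≤ Real.exp c0 * (mb + nb) := by positivity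
            linarith

lemma tw_geom_bound {r : ℝ} (hr0 : 0 ≤ r) (hr1 : r < 1) (G : Finset ℕ) :
    ∑ j ∈ G, r ^ j ≤ (1 - r)⁻¹ := by
  obtain ⟨n, hn⟩ := Finset.exists_nat_subset_range G
  calc ∑ j ∈ G, r ^ j ≤ ∑ j ∈ Finset.range n, r ^ j :=
        Finset.sum_le_sum_of_subset_of_nonneg hn (fun i _ _ => by positivity)
    _ ≤ (1 - r)⁻¹ := by
      rw [geom_sum_eq (by linarith : r ≠ 1) n]
      have hd : (r ^ n - 1) / (r - 1) = (1 - r ^ n) / (1 - r) := by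
        rw [← neg_div_neg_eq]
        ring_nf
      rw [hd, ← one_div]
      gcongr
      · linarith [pow_nonneg hr0 n]

end TwoWeight
set_option maxHeartbeats 4000000 in
open TwoWeight in
/-- Lemma 1.12. -/
theorem statement7 {X : Type*} [MeasurableSpace X] [Nonempty X]
    (S : QMS X) (hdub : S.doubling) (A B : ℝ) (hA : 1 < A) (hB : 1 < B)
    (hrd : S.revDoubling A B)
    (p q : X → ℝ) (hpm : Measurable p) (hqm : Measurable q)
    (hp1 : 1 < infOn p Set.univ) (hpq : ∀ x, p x ≤ q x)
    (hqbdd : BddAbove (Set.range q))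
    (x₀ : X) (hpLH : S.LHAt p x₀) (hqLH : S.LHAt q x₀)
    (hconst : S.L = ⊤ →
      ∃ a : ℝ, 0 < a ∧ ∃ pc qc : ℝ, ∀ x, a < S.d x₀ x → p x = pc ∧ q x = qc) :
    ∃ C : ℝ, 0 < C ∧ ∀ f g : X → ℝ,
      S.MemVL p f → S.MemVL (fun x => conj (q x)) g →
      (∑' k : ℤ, S.VNorm p ((S.I2k x₀ A k).indicator f) *
          S.VNorm (fun x => conj (q x)) ((S.I2k x₀ A k).indicator g))
        ≤ C * S.VNorm p f * S.VNorm (fun x => conj (q x)) g := by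
  classical
  by_cases hL : S.L = ⊤
  · -- L = ⊤ : the main case
    have hA0 : (0:ℝ) < A := lt_trans one_pos hA
    have hB0 : (0:ℝ) < B := lt_trans one_pos hB
    have ha₁ : 0 < S.a₁ := S.a₁_pos
    -- far-apart points exist
    have hfar : ∀ R : ℝ, ∃ u v : X, R < S.d u v := by
      intro R
      by_contra hc
      push_neg at hc
      have hle : S.L ≤ ENNReal.ofReal (max R 0) := by
        rw [QMS.L]
        apply iSup_le
        intro u
        apply iSup_le
        intro v
        exact ENNReal.ofReal_le_ofReal (le_trans (hc u v) (le_max_left _ _))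
      rw [hL] at hle
      exact absurd (lt_of_le_of_lt hle ENNReal.ofReal_lt_top) (lt_irrefl _)
    have ha₁1 : 1 ≤ S.a₁ := by
      obtain ⟨u, v, huv⟩ := hfar 0
      have h2 : S.d u u = 0 := (S.d_eq_zero_iff u u).mpr rfl
      nlinarith [S.d_triangle u v u]
    -- exponent bounds
    have hp1s : 1 < sInf (p '' Set.univ) := hp1
    have hpbdd : BddBelow (p '' Set.univ) := by
      by_contra hc
      rw [Real.sInf_of_not_bddBelow hc] at hp1s
      linarith
    set pm : ℝ := sInf (p '' Set.univ) with hpmdef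
    have hpm1 : 1 < pm := hp1s
    have hpm_le : ∀ x, pm ≤ p x := fun x => csInf_le hpbdd ⟨x, Set.mem_univ _, rfl⟩
    obtain ⟨Q, hQub⟩ := hqbdd
    have hqQ : ∀ x, q x ≤ Q := fun x => hQub ⟨x, rfl⟩
    have hp1' : ∀ x, 1 < p x := fun x => lt_of_lt_of_le hpm1 (hpm_le x)
    have hq1 : ∀ x, 1 < q x := fun x => lt_of_lt_of_le (hp1' x) (hpq x)
    have hQ1 : 1 < Q := lt_of_lt_of_le (hq1 x₀) (hqQ x₀)
    have hcq_lb : ∀ x, conj Q ≤ conj (q x) := fun x => conj_anti (hq1 x) (hqQ x)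
    have hcQ1 : 1 < conj Q := one_lt_conj hQ1
    -- data from log-Hölder and constancy hypotheses
    obtain ⟨av, hav, pc, qc, hcon⟩ := hconst hL
    obtain ⟨bp, cp, hbp, hcp, hLHp⟩ := hpLH
    obtain ⟨bq, cq, hbq, hcq, hLHq⟩ := hqLH
    set c₀ : ℝ := cp + cq with hc₀def
    have hc₀ : 0 < c₀ := by positivity
    set b₀ : ℝ := min bp bq with hb₀def
    have hb₀ : 0 < b₀ := lt_min hbp hbq
    set η : ℝ := min ((pm - 1)/2) (1/8) with hηdef
    have hη : 0 < η := lt_min (by linarith) (by norm_num)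
    have hη8 : η ≤ 1/8 := min_le_right _ _
    have hηpm : η ≤ (pm - 1)/2 := min_le_left _ _
    set ε₀ : ℝ := min (Real.exp (-(c₀/η))) (1/2) with hε₀def
    have hε₀ : 0 < ε₀ := lt_min (Real.exp_pos _) (by norm_num)
    have hε₀half : ε₀ ≤ 1/2 := min_le_right _ _
    -- the balls and their measures
    set rad : ℤ → ℝ := fun k => A ^ (k+2) * S.a₁ with hraddef
    have hrad0 : ∀ k, 0 < rad k := fun k => mul_pos (zpow_pos hA0 _) ha₁
    set ν : ℤ → ℝ≥0∞ := fun k => S.μ (S.ball x₀ (rad k)) with hνdef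
    have hνfin : ∀ k, ν k ≠ ⊤ := fun k => (S.ball_lt_top x₀ (rad k)).ne
    set nu : ℤ → ℝ := fun k => (ν k).toReal with hnudef
    have hnu0 : ∀ k, 0 ≤ nu k := fun _ => ENNReal.toReal_nonneg
    have hradmono : ∀ j k : ℤ, j ≤ k → rad j ≤ rad k := fun j k h =>
      mul_le_mul_of_nonneg_right (zpow_le_zpow_right₀ hA.le (by omega)) ha₁.le
    have hnumono : ∀ j k : ℤ, j ≤ k → nu j ≤ nu k := by
      intro j k h
      apply ENNReal.toReal_mono (hνfin k)
      apply measure_mono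
      intro y hy
      exact lt_of_lt_of_le hy (hradmono j k h)
    have hstep : ∀ k : ℤ, B * nu k ≤ nu (k+1) := by
      intro k
      have h1 := hrd x₀ (rad k) (hrad0 k)
      have h2 : A * rad k = rad (k+1) := by
        rw [hraddef]
        simp only
        rw [show k+1+2 = (k+2)+1 by ring, zpow_add_one₀ hA0.ne']
        ring
      rw [h2] at h1
      have h3 : (ENNReal.ofReal B * ν k).toReal = B * nu k := by
        rw [ENNReal.toReal_mul, ENNReal.toReal_ofReal hB0.le]
      calc B * nu k = (ENNReal.ofReal B * ν k).toReal := h3.symm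
        _ ≤ nu (k+1) := ENNReal.toReal_mono (hνfin (k+1)) h1
    have hdec : ∀ (k : ℤ) (n : ℕ), nu (k - n) * B ^ n ≤ nu k := by
      intro k n
      induction n with
      | zero => simp
      | succ n ih =>
        have h1 := hstep (k - (n+1))
        have h2 : (k - ((n:ℤ)+1)) + 1 = k - n := by ring
        have h2' : k - ((n+1 : ℕ) : ℤ) = k - ((n:ℤ)+1) := by push_cast; ring
        calc nu (k - ((n+1:ℕ):ℤ)) * B ^ (n+1)
            = (B * nu (k - ((n:ℤ)+1))) * B ^ n := by rw [h2']; ring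
          _ ≤ nu (k - n) * B ^ n := by
              apply mul_le_mul_of_nonneg_right ?_ (by positivity)
              rw [← h2]
              exact hstep _
          _ ≤ nu k := ih
    -- Bernoulli-type helper
    have hbern : ∀ (c : ℝ) (hc : 1 < c) (M : ℝ), ∃ n : ℕ, M < c ^ n := by
      intro c hc M
      obtain ⟨n, hn⟩ := exists_nat_gt (M / (c - 1))
      refine ⟨n, ?_⟩
      have h1 : 1 + (n:ℝ) * (c-1) ≤ c ^ n := by
        have := one_add_mul_le_pow (by linarith : (-2:ℝ) ≤ c - 1) n
        calc 1 + (n:ℝ)*(c-1) ≤ (1 + (c-1))^n := this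
          _ = c ^ n := by ring_nf
      have h2 : M < (n:ℝ) * (c - 1) := by
        rw [div_lt_iff₀ (by linarith)] at hn
        linarith
      linarith
    -- choice of k₁
    have hexk1 : ∃ k₁ : ℤ, rad k₁ ≤ b₀ ∧ nu k₁ ≤ ε₀ := by
      obtain ⟨n₁, hn₁⟩ := hbern A hA (A ^ (2:ℤ) * S.a₁ / b₀)
      set k' : ℤ := -(n₁:ℤ) with hk'def
      have hradk' : rad k' ≤ b₀ := by
        have h1 : rad k' = A ^ (2:ℤ) * S.a₁ / A ^ n₁ := by
          rw [hraddef]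
          simp only [hk'def]
          rw [show -(n₁:ℤ)+2 = 2 + (-(n₁:ℤ)) by ring, zpow_add₀ hA0.ne', zpow_neg,
            zpow_natCast]
          ring
        rw [h1, div_le_iff₀ (by positivity)]
        have h2 : A ^ (2:ℤ) * S.a₁ / b₀ < A ^ n₁ := hn₁
        rw [div_lt_iff₀ hb₀] at h2
        nlinarith
      obtain ⟨n₂, hn₂⟩ := hbern B hB (nu k' / ε₀)
      refine ⟨k' - n₂, ?_, ?_⟩
      · exact le_trans (hradmono _ k' (by omega)) hradk'
      · have h1 := hdec k' n₂
        have h2 : nu k' / ε₀ < B ^ n₂ := hn₂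
        rw [div_lt_iff₀ hε₀] at h2
        nlinarith [hnu0 (k' - n₂), pow_pos hB0 n₂]
    obtain ⟨k₁, hk₁rad, hk₁nu⟩ := hexk1
    have hnuk1 : ∀ k ≤ k₁, nu k ≤ ε₀ := fun k hk => le_trans (hnumono k k₁ hk) hk₁nu
    have hnu_lt1 : ∀ k ≤ k₁, nu k < 1 := fun k hk =>
      lt_of_le_of_lt (hnuk1 k hk) (by linarith)
    -- the oscillation bound δ
    set del : ℤ → ℝ := fun k => c₀ / (-Real.log (nu k)) with hdeldef
    have hdel0 : ∀ k ≤ k₁, 0 ≤ del k := by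
      intro k hk
      rcases eq_or_lt_of_le (hnu0 k) with h0 | h0
      · simp [hdeldef, ← h0]
      · have h1 : 0 < -Real.log (nu k) := by
          rw [neg_pos]
          exact Real.log_neg h0 (hnu_lt1 k hk)
        positivity
    have hdelη : ∀ k ≤ k₁, del k ≤ η := by
      intro k hk
      rcases eq_or_lt_of_le (hnu0 k) with h0 | h0
      · rw [hdeldef]
        simp [← h0]
        positivity
      · have h1 : nu k ≤ Real.exp (-(c₀/η)) := le_trans (hnuk1 k hk) (min_le_left _ _)
        have h2 : Real.log (nu k) ≤ -(c₀/η) := by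
          rw [← Real.log_exp (-(c₀/η))]
          exact Real.log_le_log h0 h1
        have h3 : c₀/η ≤ -Real.log (nu k) := by linarith
        have h4 : 0 < c₀/η := by positivity
        rw [hdeldef]
        simp only
        rw [div_le_iff₀ (by linarith)]
        calc c₀ = η * (c₀/η) := by field_simp
          _ ≤ η * (-Real.log (nu k)) := mul_le_mul_of_nonneg_left h3 hη.le
    -- annuli membership
    have hI2k_eq : ∀ k, S.I2k x₀ A k =
        S.cball x₀ (rad k) \ S.ball x₀ (A ^ (k-1) / S.a₁) := by
      intro k
      rw [QMS.I2k, if_pos hL]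
    have hmem : ∀ (k : ℤ) (y : X), y ∈ S.I2k x₀ A k →
        A ^ (k-1) / S.a₁ ≤ S.d x₀ y ∧ S.d x₀ y ≤ rad k := by
      intro k y hy
      rw [hI2k_eq k] at hy
      obtain ⟨h1, h2⟩ := hy
      exact ⟨not_lt.mp h2, h1⟩
    -- oscillation estimate on small annuli
    have hosc : ∀ k ≤ k₁, ∀ y ∈ S.I2k x₀ A k,
        p y ≤ p x₀ + del k ∧ q x₀ - del k ≤ q y := by
      intro k hk y hy
      obtain ⟨hlo, hhi⟩ := hmem k y hy
      have hdy : S.d x₀ y ≤ b₀ := le_trans hhi (le_trans (hradmono k k₁ hk) hk₁rad)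
      have hmb_le : S.mB x₀ y ≤ nu k := by
        rw [QMS.mB]
        apply ENNReal.toReal_mono (hνfin k)
        apply measure_mono
        intro z hz
        exact lt_of_lt_of_le hz hhi
      have hmb0 : 0 ≤ S.mB x₀ y := ENNReal.toReal_nonneg
      have hkey : ∀ c' : ℝ, 0 < c' → c' ≤ c₀ →
          c' / (-Real.log (S.mB x₀ y)) ≤ del k := by
        intro c' hc' hc'le
        rcases eq_or_lt_of_le hmb0 with h0 | h0
        · rw [← h0]
          simp [Real.log_zero]
          exact hdel0 k hk
        · have hmb1 : S.mB x₀ y < 1 :=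
            lt_of_le_of_lt (le_trans hmb_le (hnuk1 k hk)) (by linarith)
          have hnuk_pos : 0 < nu k := lt_of_lt_of_le h0 hmb_le
          have hlog2 : 0 < -Real.log (nu k) := by
            rw [neg_pos]
            exact Real.log_neg hnuk_pos (hnu_lt1 k hk)
          have hlogle : -Real.log (nu k) ≤ -Real.log (S.mB x₀ y) := by
            have := Real.log_le_log h0 hmb_le
            linarith
          rw [hdeldef]
          simp only
          exact div_le_div₀ hc₀.le hc'le hlog2 hlogle
      constructor
      · have h1 := hLHp y (le_trans hdy (min_le_left _ _))
        have h2 : |p x₀ - p y| ≤ del k := le_trans h1 (hkey cp hcp (by linarith))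
        have h3 := (abs_le.mp h2).1
        linarith
      · have h1 := hLHq y (le_trans hdy (min_le_right _ _))
        have h2 : |q x₀ - q y| ≤ del k := le_trans h1 (hkey cq hcq (by linarith))
        have h3 := (abs_le.mp h2).2
        linarith
    -- far witness : properties of pc, qc
    have hwit : ∃ y, av < S.d x₀ y := by
      obtain ⟨u, v, huv⟩ := hfar (S.a₁ * (S.a₀ * av + av))
      by_contra hc
      push_neg at hc
      have h1 := S.d_triangle u v x₀
      have h2 := S.d_symm u x₀
      have h3 := hc u
      have h4 := hc v
      have h5 := S.a₀_pos
      have h6 := S.d_nonneg x₀ u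
      have h7 := S.d_nonneg x₀ v
      have h8 := S.d_nonneg u x₀
      have h9 : S.d u x₀ ≤ S.a₀ * av :=
        le_trans h2 (mul_le_mul_of_nonneg_left h3 h5.le)
      have h10 : S.d u x₀ + S.d x₀ v ≤ S.a₀ * av + av := by linarith
      have h11 : S.a₁ * (S.d u x₀ + S.d x₀ v) ≤ S.a₁ * (S.a₀ * av + av) :=
        mul_le_mul_of_nonneg_left h10 ha₁.le
      linarith
    obtain ⟨y₀, hy₀⟩ := hwit
    have hpc1 : 1 < pc := by
      have := (hcon y₀ hy₀).1
      rw [← this]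
      exact hp1' y₀
    have hqc1 : 1 < qc := by
      have := (hcon y₀ hy₀).2
      rw [← this]
      exact hq1 y₀
    have hpcqc : pc ≤ qc := by
      rw [← (hcon y₀ hy₀).1, ← (hcon y₀ hy₀).2]
      exact hpq y₀
    -- choice of k₂
    obtain ⟨k₂, hk₂⟩ : ∃ k₂ : ℤ, ∀ k, k₂ ≤ k → av < A ^ (k-1) / S.a₁ := by
      obtain ⟨n, hn⟩ := hbern A hA (av * S.a₁)
      refine ⟨(n:ℤ) + 1, fun k hk => ?_⟩
      have h1 : (A:ℝ) ^ (n:ℤ) ≤ A ^ (k-1) := zpow_le_zpow_right₀ hA.le (by omega)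
      rw [lt_div_iff₀ ha₁]
      calc av * S.a₁ < A ^ n := hn
        _ = A ^ (n:ℤ) := by rw [zpow_natCast]
        _ ≤ A ^ (k-1) := h1
    -- overlap constant
    have hlogA : 0 < Real.log A := Real.log_pos hA
    set D : ℝ := 3 + 2 * Real.log S.a₁ / Real.log A with hDdef
    have hD0 : 0 ≤ D := by
      have h1 : 0 ≤ Real.log S.a₁ := Real.log_nonneg ha₁1
      positivity
    set N : ℕ := ⌈D⌉₊ + 1 with hNdef
    have hcard : ∀ (x : X) (F : Finset ℤ),
        (F.filter (fun k => x ∈ S.I2k x₀ A k)).card ≤ N := by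
      intro x F
      by_cases hex : ∃ k ∈ F, x ∈ S.I2k x₀ A k
      · obtain ⟨k0, hk0F, hk0⟩ := hex
        set t : ℝ := S.d x₀ x with htdef
        have ht0 : 0 < t := by
          have h1 := (hmem k0 x hk0).1
          have h2 : 0 < A ^ (k0-1) / S.a₁ := by positivity
          linarith
        set β : ℝ := (Real.log t - Real.log S.a₁ - 2*Real.log A)/Real.log A with hβdef
        have hsub : F.filter (fun k => x ∈ S.I2k x₀ A k) ⊆
            Finset.Icc ⌈β⌉ (⌈β⌉ + (⌈D⌉₊ : ℤ)) := by
          intro k hkmem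
          rw [Finset.mem_filter] at hkmem
          obtain ⟨-, hk⟩ := hkmem
          obtain ⟨hlo, hhi⟩ := hmem k x hk
          have h1 : Real.log t ≤ ((k:ℝ)+2) * Real.log A + Real.log S.a₁ := by
            calc Real.log t ≤ Real.log (A ^ (k+2) * S.a₁) := Real.log_le_log ht0 hhi
              _ = ((k:ℝ)+2) * Real.log A + Real.log S.a₁ := by
                  rw [Real.log_mul (by positivity) ha₁.ne', Real.log_zpow]
                  push_cast
                  ring
          have h2 : ((k:ℝ)-1) * Real.log A - Real.log S.a₁ ≤ Real.log t := by
            calc ((k:ℝ)-1) * Real.log A - Real.log S.a₁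
                = Real.log (A ^ (k-1) / S.a₁) := by
                  rw [Real.log_div (by positivity) ha₁.ne', Real.log_zpow]
                  push_cast
                  ring
              _ ≤ Real.log t := Real.log_le_log (by positivity) hlo
          rw [Finset.mem_Icc]
          constructor
          · rw [Int.ceil_le, hβdef, div_le_iff₀ hlogA]
            linarith
          · have hβmul : β * Real.log A =
                Real.log t - Real.log S.a₁ - 2*Real.log A :=
              div_mul_cancel₀ _ hlogA.ne'
            have hDmul : D * Real.log A = 3*Real.log A + 2*Real.log S.a₁ := by
              rw [hDdef]
              field_simp
            have hkmul : (k:ℝ) * Real.log A ≤ (β + D) * Real.log A := by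
              rw [add_mul, hβmul, hDmul]
              linarith
            have hkle : (k:ℝ) ≤ β + D := le_of_mul_le_mul_right hkmul hlogA
            have hβle : β ≤ ((⌈β⌉:ℤ):ℝ) := Int.le_ceil β
            have hDle : D ≤ ((⌈D⌉₊:ℕ):ℝ) := Nat.le_ceil D
            have : (k:ℝ) ≤ ((⌈β⌉ + (⌈D⌉₊:ℤ) : ℤ) : ℝ) := by
              push_cast
              linarith
            exact_mod_cast this
        calc (F.filter (fun k => x ∈ S.I2k x₀ A k)).card
            ≤ (Finset.Icc ⌈β⌉ (⌈β⌉ + (⌈D⌉₊:ℤ))).card := Finset.card_le_card hsub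
          _ = N := by
              rw [Int.card_Icc]
              omega
      · push_neg at hex
        rw [Finset.filter_false_of_mem hex]
        simp
    -- geometric ratio and total constant
    set rr : ℝ := B⁻¹ ^ ((4:ℝ)⁻¹) with hrrdef
    have hBinv0 : (0:ℝ) ≤ B⁻¹ := by positivity
    have hBinv1 : B⁻¹ < 1 := by
      have h1 : (1:ℝ)/B < 1 := by
        rw [div_lt_one hB0]
        exact hB
      simpa [one_div] using h1
    have hrr0 : 0 ≤ rr := Real.rpow_nonneg hBinv0 _
    have hrr1 : rr < 1 := Real.rpow_lt_one hBinv0 hBinv1 (by norm_num)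
    have h1rr : 0 < 1 - rr := by linarith only [hrr1]
    set Mmid : ℕ := (Finset.Ioo k₁ k₂).card with hMmiddef
    set Ct : ℝ := (Real.exp c₀ + 1) * (2*(N:ℝ)) + (1-rr)⁻¹ + (Mmid:ℝ) + 1 with hCtdef
    have hCt0 : 0 < Ct := by
      have h1 : 0 ≤ (Real.exp c₀ + 1) * (2*(N:ℝ)) := by positivity
      have h2 : 0 ≤ (1-rr)⁻¹ := (inv_pos.mpr h1rr).le
      have h3 : 0 ≤ (Mmid:ℝ) := Nat.cast_nonneg _
      rw [hCtdef]
      linarith only [h1, h2, h3]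
    refine ⟨Ct, hCt0, ?_⟩
    intro f g hf hg
    set qe : X → ℝ := fun x => conj (q x) with hqedef
    have hnf0 : 0 ≤ S.VNorm p f := S.vnorm_nonneg _ _
    have hng0 : 0 ≤ S.VNorm qe g := S.vnorm_nonneg _ _
    set tk : ℤ → ℝ := fun k => S.VNorm p ((S.I2k x₀ A k).indicator f) *
        S.VNorm qe ((S.I2k x₀ A k).indicator g) with htkdef
    have hqe_pos : ∀ x, 0 < qe x := fun x => lt_trans one_pos (one_lt_conj (hq1 x))
    have hp_pos : ∀ x, 0 < p x := fun x => lt_trans one_pos (hp1' x)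
    -- the finite-sum bound
    have hmain : ∀ Λf Λg : ℝ, S.VNorm p f < Λf → S.VNorm qe g < Λg →
        ∀ F : Finset ℤ, ∑ k ∈ F, tk k ≤ Ct * (Λf * Λg) := by
      intro Λf Λg hΛf hΛg F
      have hΛf0 : 0 < Λf := lt_of_le_of_lt hnf0 hΛf
      have hΛg0 : 0 < Λg := lt_of_le_of_lt hng0 hΛg
      have hmodf : S.modular p (fun x => f x / Λf) ≤ 1 :=
        S.modular_le_one_of_lt (by linarith only [hpm1] : (0:ℝ) < pm) hpm_le hf hΛf
      have hmodg : S.modular qe (fun x => g x / Λg) ≤ 1 :=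
        S.modular_le_one_of_lt (by linarith only [hcQ1] : (0:ℝ) < conj Q) hcq_lb hg hΛg
      set m : ℤ → ℝ≥0∞ := fun k =>
        S.modular p (fun x => (S.I2k x₀ A k).indicator f x / Λf) with hmdef
      set n : ℤ → ℝ≥0∞ := fun k =>
        S.modular qe (fun x => (S.I2k x₀ A k).indicator g x / Λg) with hndef
      have habsind : ∀ (E : Set X) (h : X → ℝ) (x : X), |E.indicator h x| ≤ |h x| := by
        intro E h x
        by_cases hx : x ∈ E
        · simp [hx]
        · simp [hx, abs_nonneg]
      have hmle : ∀ k, m k ≤ 1 := by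
        intro k
        refine le_trans (S.modular_mono (fun x => (hp_pos x).le) ?_) hmodf
        intro x
        rw [abs_div, abs_div]
        exact (div_le_div_iff_of_pos_right (abs_pos.mpr hΛf0.ne')).mpr (habsind _ _ _)
      have hnle : ∀ k, n k ≤ 1 := by
        intro k
        refine le_trans (S.modular_mono (fun x => (hqe_pos x).le) ?_) hmodg
        intro x
        rw [abs_div, abs_div]
        exact (div_le_div_iff_of_pos_right (abs_pos.mpr hΛg0.ne')).mpr (habsind _ _ _)
      -- the bounded-overlap sum estimates
      have hmsum : ∀ F' : Finset ℤ, ∑ k ∈ F', m k ≤ (N : ℝ≥0∞) := by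
        intro F'
        have heq : ∀ k ∈ F', m k = ∫⁻ x, (S.I2k x₀ A k).indicator
            (fun y => ENNReal.ofReal (|f y / Λf| ^ p y)) x ∂S.μ :=
          fun k _ => S.modular_indicator_eq hp_pos f _ Λf
        rw [Finset.sum_congr rfl heq]
        refine le_trans (S.sum_lintegral_le F' _) ?_
        have hpt : ∀ x, (∑ k ∈ F', (S.I2k x₀ A k).indicator
            (fun y => ENNReal.ofReal (|f y / Λf| ^ p y)) x) ≤
            (N:ℝ≥0∞) * ENNReal.ofReal (|f x / Λf| ^ p x) := by
          intro x
          have h1 : (∑ k ∈ F', (S.I2k x₀ A k).indicator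
              (fun y => ENNReal.ofReal (|f y / Λf| ^ p y)) x) =
              ∑ k ∈ F'.filter (fun k => x ∈ S.I2k x₀ A k),
                ENNReal.ofReal (|f x / Λf| ^ p x) := by
            rw [Finset.sum_filter]
            apply Finset.sum_congr rfl
            intro k _
            rw [Set.indicator_apply]
          rw [h1, Finset.sum_const, nsmul_eq_mul]
          apply mul_le_mul_left
          exact_mod_cast Nat.cast_le.mpr (hcard x F')
        refine le_trans (lintegral_mono hpt) ?_
        rw [lintegral_const_mul' _ _ (by simp : (N:ℝ≥0∞) ≠ ⊤)]
        calc (N:ℝ≥0∞) * (∫⁻ x, ENNReal.ofReal (|f x / Λf| ^ p x) ∂S.μ)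
            ≤ (N:ℝ≥0∞) * 1 := mul_le_mul_right hmodf _
          _ = (N:ℝ≥0∞) := mul_one _
      have hnsum : ∀ F' : Finset ℤ, ∑ k ∈ F', n k ≤ (N : ℝ≥0∞) := by
        intro F'
        have heq : ∀ k ∈ F', n k = ∫⁻ x, (S.I2k x₀ A k).indicator
            (fun y => ENNReal.ofReal (|g y / Λg| ^ qe y)) x ∂S.μ :=
          fun k _ => S.modular_indicator_eq hqe_pos g _ Λg
        rw [Finset.sum_congr rfl heq]
        refine le_trans (S.sum_lintegral_le F' _) ?_
        have hpt : ∀ x, (∑ k ∈ F', (S.I2k x₀ A k).indicator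
            (fun y => ENNReal.ofReal (|g y / Λg| ^ qe y)) x) ≤
            (N:ℝ≥0∞) * ENNReal.ofReal (|g x / Λg| ^ qe x) := by
          intro x
          have h1 : (∑ k ∈ F', (S.I2k x₀ A k).indicator
              (fun y => ENNReal.ofReal (|g y / Λg| ^ qe y)) x) =
              ∑ k ∈ F'.filter (fun k => x ∈ S.I2k x₀ A k),
                ENNReal.ofReal (|g x / Λg| ^ qe x) := by
            rw [Finset.sum_filter]
            apply Finset.sum_congr rfl
            intro k _
            rw [Set.indicator_apply]
          rw [h1, Finset.sum_const, nsmul_eq_mul]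
          apply mul_le_mul_left
          exact_mod_cast Nat.cast_le.mpr (hcard x F')
        refine le_trans (lintegral_mono hpt) ?_
        rw [lintegral_const_mul' _ _ (by simp : (N:ℝ≥0∞) ≠ ⊤)]
        calc (N:ℝ≥0∞) * (∫⁻ x, ENNReal.ofReal (|g x / Λg| ^ qe x) ∂S.μ)
            ≤ (N:ℝ≥0∞) * 1 := mul_le_mul_right hmodg _
          _ = (N:ℝ≥0∞) := mul_one _
      -- real versions
      set mb : ℤ → ℝ := fun k => (m k).toReal with hmbdef
      set nb : ℤ → ℝ := fun k => (n k).toReal with hnbdef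
      have hmfin : ∀ k, m k ≠ ⊤ := fun k => (lt_of_le_of_lt (hmle k) one_lt_top).ne
      have hnfin : ∀ k, n k ≠ ⊤ := fun k => (lt_of_le_of_lt (hnle k) one_lt_top).ne
      have hmb0 : ∀ k, 0 ≤ mb k := fun _ => ENNReal.toReal_nonneg
      have hnb0 : ∀ k, 0 ≤ nb k := fun _ => ENNReal.toReal_nonneg
      have hmb1 : ∀ k, mb k ≤ 1 := by
        intro k
        rw [← ENNReal.toReal_one]
        exact ENNReal.toReal_mono one_ne_top (hmle k)
      have hnb1 : ∀ k, nb k ≤ 1 := by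
        intro k
        rw [← ENNReal.toReal_one]
        exact ENNReal.toReal_mono one_ne_top (hnle k)
      have hmbsum : ∀ F' : Finset ℤ, ∑ k ∈ F', mb k ≤ (N:ℝ) := by
        intro F'
        rw [← ENNReal.toReal_sum (fun k _ => hmfin k)]
        calc (∑ k ∈ F', m k).toReal ≤ ((N:ℝ≥0∞)).toReal :=
              ENNReal.toReal_mono (by simp) (hmsum F')
          _ = (N:ℝ) := by simp
      have hnbsum : ∀ F' : Finset ℤ, ∑ k ∈ F', nb k ≤ (N:ℝ) := by
        intro F'
        rw [← ENNReal.toReal_sum (fun k _ => hnfin k)]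
        calc (∑ k ∈ F', n k).toReal ≤ ((N:ℝ≥0∞)).toReal :=
              ENNReal.toReal_mono (by simp) (hnsum F')
          _ = (N:ℝ) := by simp
      -- norm bounds from modulars
      have hnormf : ∀ (k : ℤ) (u : ℝ), 0 < u → (∀ y ∈ S.I2k x₀ A k, p y ≤ u) →
          S.VNorm p ((S.I2k x₀ A k).indicator f) ≤ Λf * mb k ^ (1/u) := by
        intro k u hu hb
        refine S.vnorm_le_rpow hp_pos hΛf0 hu ?_ (hmle k)
        intro x hx
        by_cases hxI : x ∈ S.I2k x₀ A k
        · exact hb x hxI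
        · exact absurd (Set.indicator_of_notMem hxI f) hx
      have hnormg : ∀ (k : ℤ) (v : ℝ), 0 < v → (∀ y ∈ S.I2k x₀ A k, qe y ≤ v) →
          S.VNorm qe ((S.I2k x₀ A k).indicator g) ≤ Λg * nb k ^ (1/v) := by
        intro k v hv hb
        refine S.vnorm_le_rpow hqe_pos hΛg0 hv ?_ (hnle k)
        intro x hx
        by_cases hxI : x ∈ S.I2k x₀ A k
        · exact hb x hxI
        · exact absurd (Set.indicator_of_notMem hxI g) hx
      -- per-term bound
      set sk : ℤ → ℝ := fun k =>
        (Real.exp c₀ + 1) * (mb k + nb k) +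
        (if k ≤ k₁ then rr ^ ((k₁ - k).toNat) else 0) +
        (if k₁ < k ∧ k < k₂ then (1:ℝ) else 0) with hskdef
      have hkey : ∀ k : ℤ, tk k ≤ Λf * Λg * sk k := by
        intro k
        have hgeo_nn : (0:ℝ) ≤ (if k ≤ k₁ then rr ^ ((k₁ - k).toNat) else 0) := by
          split <;> positivity
        have hmid_nn : (0:ℝ) ≤ (if k₁ < k ∧ k < k₂ then (1:ℝ) else 0) := by
          split <;> norm_num
        have hmbnb_nn : (0:ℝ) ≤ mb k + nb k := add_nonneg (hmb0 k) (hnb0 k)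
        have hexp1 : (1:ℝ) ≤ Real.exp c₀ + 1 := by
          have hhe := Real.exp_pos c₀
          linarith only [hhe]
        rcases le_or_gt k k₁ with hk | hk
        · -- small annuli
          have hδ0 := hdel0 k hk
          have hδη := hdelη k hk
          have hu1 : 1 < p x₀ + del k := by
            have hh := hp1' x₀
            linarith only [hh, hδ0]
          have hw1 : 1 < q x₀ - del k := by
            have h1 := le_trans (hpm_le x₀) (hpq x₀)
            have h2 : del k ≤ (pm-1)/2 := le_trans hδη hηpm
            linarith only [h1, h2, hpm1]
          have hv1 : 1 < conj (q x₀ - del k) := one_lt_conj hw1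
          have hsig : 1 - 2*del k ≤ 1/(p x₀ + del k) + 1/(conj (q x₀ - del k)) := by
            rw [one_div_conj hw1]
            rcases le_or_gt (p x₀ + del k) (q x₀ - del k) with hc | hc
            · have h1 : 1/(q x₀ - del k) ≤ 1/(p x₀ + del k) :=
                one_div_le_one_div_of_le (by linarith only [hu1]) hc
              linarith only [h1, hδ0]
            · have huw1 : (1:ℝ) ≤ (p x₀ + del k) * (q x₀ - del k) := by
                nlinarith only [hu1, hw1]
              have hu0 : (p x₀ + del k) ≠ 0 := by linarith only [hu1]
              have hw0 : (q x₀ - del k) ≠ 0 := by linarith only [hw1]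
              have h1 : 1/(q x₀ - del k) - 1/(p x₀ + del k)
                  = ((p x₀ + del k) - (q x₀ - del k)) /
                    ((p x₀ + del k) * (q x₀ - del k)) := by
                rw [div_sub_div _ _ hw0 hu0, one_mul, mul_one, mul_comm]
              have h2 := div_le_self
                (by linarith only [hc] : (0:ℝ) ≤ (p x₀ + del k) - (q x₀ - del k)) huw1
              have h3 : (p x₀ + del k) - (q x₀ - del k) ≤ 2*del k := by
                have hh := hpq x₀
                linarith only [hh]
              linarith only [h1, h2, h3]
          have h1 := hnormf k (p x₀ + del k) (by linarith only [hu1])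
            (fun y hy => (hosc k hk y hy).1)
          have h2 := hnormg k (conj (q x₀ - del k)) (by linarith only [hv1])
            (fun y hy => conj_anti hw1 (hosc k hk y hy).2)
          have hprod : tk k ≤ (Λf * mb k ^ (1/(p x₀ + del k))) *
              (Λg * nb k ^ (1/(conj (q x₀ - del k)))) :=
            mul_le_mul h1 h2 (S.vnorm_nonneg _ _) (by positivity)
          have hsb := tw_small_bound (hmb0 k) (hmb1 k) (hnb0 k) (hnb1 k) (hnu0 k)
            (hnu_lt1 k hk) hc₀ rfl (le_trans hδη hη8) hδ0
            (by linarith only [hu1]) (by linarith only [hv1]) hsig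
          have hdecayk : nu k ≤ (B⁻¹) ^ ((k₁ - k).toNat) := by
            have h0 := hdec k₁ ((k₁ - k).toNat)
            have hcast : k₁ - ((k₁ - k).toNat : ℤ) = k := by omega
            rw [hcast] at h0
            have h1' : nu k * B ^ ((k₁ - k).toNat) ≤ 1 := by
              linarith only [h0, hk₁nu, hε₀half]
            have h2' : nu k ≤ 1 / B ^ ((k₁ - k).toNat) :=
              (le_div_iff₀ (pow_pos hB0 _)).mpr h1'
            rw [inv_pow]
            rwa [one_div] at h2'
          have hgeo : nu k ^ ((4:ℝ)⁻¹) ≤ rr ^ ((k₁ - k).toNat) := by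
            calc nu k ^ ((4:ℝ)⁻¹) ≤ ((B⁻¹) ^ ((k₁ - k).toNat)) ^ ((4:ℝ)⁻¹) :=
                  Real.rpow_le_rpow (hnu0 k) hdecayk (by norm_num)
              _ = rr ^ ((k₁ - k).toNat) := by
                  rw [← Real.rpow_natCast B⁻¹ ((k₁ - k).toNat),
                    ← Real.rpow_natCast rr ((k₁ - k).toNat), hrrdef,
                    ← Real.rpow_mul hBinv0, ← Real.rpow_mul hBinv0]
                  congr 1
                  ring
          have hfin1 : mb k ^ (1/(p x₀ + del k)) * nb k ^ (1/(conj (q x₀ - del k))) ≤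
              (Real.exp c₀ + 1) * (mb k + nb k) + rr ^ ((k₁ - k).toNat) := by
            have h5 : Real.exp c₀ * (mb k + nb k) ≤
                (Real.exp c₀ + 1) * (mb k + nb k) :=
              mul_le_mul_of_nonneg_right (by linarith only [Real.exp_pos c₀]) hmbnb_nn
            linarith only [hsb, hgeo, h5]
          calc tk k ≤ (Λf * mb k ^ (1/(p x₀ + del k))) *
              (Λg * nb k ^ (1/(conj (q x₀ - del k)))) := hprod
            _ = Λf * Λg * (mb k ^ (1/(p x₀ + del k)) *
                nb k ^ (1/(conj (q x₀ - del k)))) := by ring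
            _ ≤ Λf * Λg * ((Real.exp c₀ + 1) * (mb k + nb k) +
                rr ^ ((k₁ - k).toNat)) :=
                mul_le_mul_of_nonneg_left hfin1 (by positivity)
            _ ≤ Λf * Λg * sk k := by
                apply mul_le_mul_of_nonneg_left ?_ (by positivity)
                rw [hskdef]
                simp only
                rw [if_pos hk]
                linarith only [hmid_nn]
        · rcases lt_or_ge k k₂ with hk2 | hk2
          · -- middle annuli
            have h1 : S.VNorm p ((S.I2k x₀ A k).indicator f) ≤ Λf :=
              S.vnorm_le_of_mem hΛf0 (hmle k)
            have h2 : S.VNorm qe ((S.I2k x₀ A k).indicator g) ≤ Λg :=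
              S.vnorm_le_of_mem hΛg0 (hnle k)
            have h3 : tk k ≤ Λf * Λg :=
              mul_le_mul h1 h2 (S.vnorm_nonneg _ _) hΛf0.le
            have h4 : (1:ℝ) ≤ sk k := by
              rw [hskdef]
              simp only
              rw [if_neg (not_le.mpr hk), if_pos ⟨hk, hk2⟩]
              have h5 : 0 ≤ (Real.exp c₀ + 1) * (mb k + nb k) := by positivity
              linarith only [h5, hgeo_nn]
            calc tk k ≤ Λf * Λg := h3
              _ = Λf * Λg * 1 := (mul_one _).symm
              _ ≤ Λf * Λg * sk k :=
                  mul_le_mul_of_nonneg_left h4 (by positivity)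
          · -- large annuli
            have hconk : ∀ y ∈ S.I2k x₀ A k, p y = pc ∧ q y = qc := by
              intro y hy
              exact hcon y (lt_of_lt_of_le (hk₂ k hk2) (hmem k y hy).1)
            have hcqc1 : 1 < conj qc := one_lt_conj hqc1
            have h1 := hnormf k pc (by linarith only [hpc1]) (fun y hy => ((hconk y hy).1).le)
            have h2 := hnormg k (conj qc) (by linarith only [hcqc1]) (fun y hy => by
              show conj (q y) ≤ conj qc
              rw [(hconk y hy).2])
            have hsig : 1 ≤ 1/pc + 1/(conj qc) := by
              rw [one_div_conj hqc1]
              have h3 : 1/qc ≤ 1/pc := one_div_le_one_div_of_le (by linarith only [hpc1]) hpcqc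
              linarith only [h3]
            have hlb := tw_large_bound (hmb0 k) (hmb1 k) (hnb0 k) (hnb1 k)
              (by linarith only [hpc1] : (0:ℝ) < pc)
              (by linarith only [hcqc1] : (0:ℝ) < conj qc) hsig
            calc tk k ≤ (Λf * mb k ^ (1/pc)) * (Λg * nb k ^ (1/(conj qc))) :=
                  mul_le_mul h1 h2 (S.vnorm_nonneg _ _) (by positivity)
              _ = Λf * Λg * (mb k ^ (1/pc) * nb k ^ (1/(conj qc))) := by ring
              _ ≤ Λf * Λg * (mb k + nb k) :=
                  mul_le_mul_of_nonneg_left hlb (by positivity)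
              _ ≤ Λf * Λg * sk k := by
                  apply mul_le_mul_of_nonneg_left ?_ (by positivity)
                  rw [hskdef]
                  simp only
                  have h6 : mb k + nb k ≤ (Real.exp c₀ + 1) * (mb k + nb k) := by
                    nlinarith only [hmbnb_nn, hexp1]
                  linarith only [h6, hgeo_nn, hmid_nn]
      -- summing up
      have hsksum : ∑ k ∈ F, sk k ≤
          (Real.exp c₀ + 1) * (2*(N:ℝ)) + (1-rr)⁻¹ + (Mmid:ℝ) := by
        rw [hskdef]
        rw [Finset.sum_add_distrib, Finset.sum_add_distrib]
        have h1 : ∑ k ∈ F, (Real.exp c₀ + 1) * (mb k + nb k) ≤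
            (Real.exp c₀ + 1) * (2*(N:ℝ)) := by
          rw [← Finset.mul_sum]
          apply mul_le_mul_of_nonneg_left ?_ (by positivity)
          rw [Finset.sum_add_distrib]
          linarith only [hmbsum F, hnbsum F]
        have h2 : ∑ k ∈ F, (if k ≤ k₁ then rr ^ ((k₁ - k).toNat) else 0) ≤
            (1-rr)⁻¹ := by
          rw [← Finset.sum_filter]
          have hinj : ∀ a ∈ F.filter (fun k => k ≤ k₁), ∀ b ∈ F.filter (fun k => k ≤ k₁),
              (k₁ - a).toNat = (k₁ - b).toNat → a = b := by
            intro a ha b hb hab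
            rw [Finset.mem_filter] at ha hb
            omega
          have him : ∑ k ∈ F.filter (fun k => k ≤ k₁), rr ^ ((k₁ - k).toNat) =
              ∑ j ∈ (F.filter (fun k => k ≤ k₁)).image (fun k => (k₁ - k).toNat),
                rr ^ j := (Finset.sum_image hinj).symm
          rw [him]
          exact tw_geom_bound hrr0 hrr1 _
        have h3 : ∑ k ∈ F, (if k₁ < k ∧ k < k₂ then (1:ℝ) else 0) ≤ (Mmid:ℝ) := by
          rw [Finset.sum_boole]
          have hsub2 : F.filter (fun k => k₁ < k ∧ k < k₂) ⊆ Finset.Ioo k₁ k₂ := by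
            intro k hkk
            rw [Finset.mem_filter] at hkk
            rw [Finset.mem_Ioo]
            exact hkk.2
          have := Finset.card_le_card hsub2
          rw [hMmiddef]
          exact_mod_cast this
        linarith only [h1, h2, h3]
      calc ∑ k ∈ F, tk k ≤ ∑ k ∈ F, Λf * Λg * sk k :=
            Finset.sum_le_sum (fun k _ => hkey k)
        _ = Λf * Λg * ∑ k ∈ F, sk k := by rw [← Finset.mul_sum]
        _ ≤ Λf * Λg * ((Real.exp c₀ + 1) * (2*(N:ℝ)) + (1-rr)⁻¹ + (Mmid:ℝ)) :=
            mul_le_mul_of_nonneg_left hsksum (by positivity)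
        _ ≤ Λf * Λg * Ct := by
            apply mul_le_mul_of_nonneg_left ?_ (by positivity)
            rw [hCtdef]
            linarith only []
        _ = Ct * (Λf * Λg) := by ring
    -- pass to the infinite sum
    have htsum : ∀ Λf Λg : ℝ, S.VNorm p f < Λf → S.VNorm qe g < Λg →
        (∑' k : ℤ, tk k) ≤ Ct * (Λf * Λg) := by
      intro Λf Λg h1 h2
      by_cases hs : Summable tk
      · exact Summable.tsum_le_of_sum_le hs (hmain Λf Λg h1 h2)
      · rw [tsum_eq_zero_of_not_summable hs]
        have hΛf0 : 0 < Λf := lt_of_le_of_lt hnf0 h1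
        have hΛg0 : 0 < Λg := lt_of_le_of_lt hng0 h2
        positivity
    -- the ε-argument
    have hfinal : (∑' k : ℤ, tk k) ≤ Ct * S.VNorm p f * S.VNorm qe g := by
      apply _root_.le_of_forall_pos_le_add
      intro δ hδ
      have hpos : 0 < Ct * (S.VNorm p f + S.VNorm qe g + 1) := by
        apply mul_pos hCt0
        linarith only [hnf0, hng0]
      set ε : ℝ := min 1 (δ / (Ct * (S.VNorm p f + S.VNorm qe g + 1))) with hεdef
      have hε0 : 0 < ε := lt_min one_pos (div_pos hδ hpos)
      have hε1 : ε ≤ 1 := min_le_left _ _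
      have hε2 : ε * (Ct * (S.VNorm p f + S.VNorm qe g + 1)) ≤ δ := by
        rw [← le_div_iff₀ hpos]
        exact min_le_right _ _
      have h3 := htsum (S.VNorm p f + ε) (S.VNorm qe g + ε)
        (by linarith only [hε0]) (by linarith only [hε0])
      have he2 : ε*ε ≤ ε := by nlinarith only [hε0.le, hε1]
      have hexpand : Ct * ((S.VNorm p f + ε) * (S.VNorm qe g + ε)) ≤
          Ct * S.VNorm p f * S.VNorm qe g + δ := by
        have e1 : Ct * ((S.VNorm p f + ε) * (S.VNorm qe g + ε)) =
            Ct * S.VNorm p f * S.VNorm qe g +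
            (Ct * ε * S.VNorm p f + Ct * ε * S.VNorm qe g + Ct * (ε*ε)) := by ring
        have e2 : Ct * (ε*ε) ≤ Ct * ε := mul_le_mul_of_nonneg_left he2 hCt0.le
        have e3 : ε * (Ct * (S.VNorm p f + S.VNorm qe g + 1)) =
            Ct * ε * S.VNorm p f + Ct * ε * S.VNorm qe g + Ct * ε := by ring
        rw [e1]
        have e4 : Ct * ε * S.VNorm p f + Ct * ε * S.VNorm qe g + Ct * (ε*ε) ≤ δ := by
          rw [e3] at hε2
          linarith only [e2, hε2]
        linarith only [e4]
      linarith only [h3, hexpand]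
    exact hfinal


  · -- The diameter is finite; reverse doubling then forces the measure to vanish.
    have x : X := Classical.arbitrary X
    have hdle : ∀ u v : X, S.d u v ≤ S.L.toReal := by
      intro u v
      have h1 : ENNReal.ofReal (S.d u v) ≤ S.L := by
        exact le_iSup₂ (f := fun u v => ENNReal.ofReal (S.d u v)) u v
      have h2 := ENNReal.toReal_mono hL h1
      rwa [ENNReal.toReal_ofReal (S.d_nonneg u v)] at h2
    have hL0 : 0 ≤ S.L.toReal := ENNReal.toReal_nonneg
    set R : ℝ := S.L.toReal + 1 with hR
    have hR0 : 0 < R := by linarith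
    have hball : ∀ r, R ≤ r → S.ball x r = Set.univ := by
      intro r hr
      apply Set.eq_univ_of_forall
      intro y
      have := hdle x y
      show S.d x y < r
      linarith
    have h1 := hrd x R hR0
    rw [hball R le_rfl, hball (A * R) (by nlinarith)] at h1
    have hfin : S.μ Set.univ < ⊤ := by
      rw [← hball R le_rfl]
      exact S.ball_lt_top x R
    have huniv : S.μ Set.univ = 0 := by
      by_contra hc
      have h2 : ENNReal.ofReal B ≤ 1 := by
        have h1' : ENNReal.ofReal B * S.μ Set.univ ≤ 1 * S.μ Set.univ := by
          simpa using h1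
        exact (ENNReal.mul_le_mul_iff_left hc hfin.ne).mp h1'
      have h3 : (1 : ℝ≥0∞) < ENNReal.ofReal B := by
        rw [ENNReal.one_lt_ofReal]
        exact hB
      exact absurd (lt_of_lt_of_le h3 h2) (lt_irrefl _)
    refine ⟨1, one_pos, ?_⟩
    intro f g _ _
    simp [S.vnorm_eq_zero_of_univ_null huniv]
end
end
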